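/- arXiv:2308.09261 — 4 statements merged into one kernel-verified Lean document; each statement's English description precedes it below -/
import Mathlib

section
/- Let T be a bounded linear operator on H admitting an A-adjoint T♯. Then for every nonzero complex number α, (w_A(T))² ≤ ( (1/2)·max{1, |1 − α|}·‖T♯T + TT♯‖_A + w_A(T²) ) / |α|. -/
noncomputable section

open scoped ComplexInnerProductSpace

variable {H : Type*} [NormedAddCommGroup H] [InnerProductSpace ℂ H] [CompleteSpace H]

/-- The semi-inner product induced by a positive operator `A`:
`⟨x,y⟩_A = ⟨Ax,y⟩` (linear in the first argument, following the paper's convention). -/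
def innerA (A : H →L[ℂ] H) (x y : H) : ℂ := ⟪y, A x⟫

/-- The seminorm induced by `A`: `‖x‖_A = ⟨Ax,x⟩^{1/2}`. -/
def normA (A : H →L[ℂ] H) (x : H) : ℝ := Real.sqrt (innerA A x x).re

/-- The `A`-numerical radius `w_A(T) = sup { |⟨Tx,x⟩_A| : ‖x‖_A = 1 }`. -/
def wA (A T : H →L[ℂ] H) : ℝ :=
  sSup {r : ℝ | ∃ x : H, normA A x = 1 ∧ r = ‖innerA A (T x) x‖}

/-- The `A`-Crawford number `c_A(T) = inf { |⟨Tx,x⟩_A| : ‖x‖_A = 1 }`. -/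
def cA (A T : H →L[ℂ] H) : ℝ :=
  sInf {r : ℝ | ∃ x : H, normA A x = 1 ∧ r = ‖innerA A (T x) x‖}

/-- The `A`-operator seminorm `‖T‖_A = sup { ‖Tx‖_A : ‖x‖_A = 1 }`. -/
def opNormA (A T : H →L[ℂ] H) : ℝ :=
  sSup {r : ℝ | ∃ x : H, normA A x = 1 ∧ r = normA A (T x)}

/-- The `A`-Euclidean operator radius of the pair `(B, C)`. -/
def wAe (A B C : H →L[ℂ] H) : ℝ :=
  sSup {r : ℝ | ∃ x : H, normA A x = 1 ∧
    r = Real.sqrt ((‖innerA A (B x) x‖)^2 + (‖innerA A (C x) x‖)^2)}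

/-- The `A`-Euclidean operator seminorm of the pair `(B, C)`. -/
def normAe (A B C : H →L[ℂ] H) : ℝ :=
  sSup {r : ℝ | ∃ x : H, normA A x = 1 ∧
    r = Real.sqrt ((normA A (B x))^2 + (normA A (C x))^2)}

/-- `Re_A(T) = (T + T♯)/2`, where `Ts` is an `A`-adjoint of `T`. -/
def ReA (T Ts : H →L[ℂ] H) : H →L[ℂ] H := (2 : ℂ)⁻¹ • (T + Ts)

/-- `Im_A(T) = (T - T♯)/(2i)`, where `Ts` is an `A`-adjoint of `T`. -/
def ImA (T Ts : H →L[ℂ] H) : H →L[ℂ] H := (2 * Complex.I)⁻¹ • (T - Ts)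

namespace Stmt12Aux

open ContinuousLinearMap Complex

variable {A : H →L[ℂ] H}

lemma isym (hA : A.IsPositive) (x y : H) : ⟪A x, y⟫ = ⟪x, A y⟫ := by
  have := hA.1 x y
  simpa using this

lemma innerA_conj (hA : A.IsPositive) (x y : H) :
    innerA A x y = (starRingEnd ℂ) (innerA A y x) := by
  rw [innerA, innerA, ← inner_conj_symm, isym hA]

lemma innerA_self_re_nonneg (hA : A.IsPositive) (x : H) : 0 ≤ (innerA A x x).re :=
  (Complex.nonneg_iff.mp (hA.inner_nonneg_right x)).1

lemma innerA_self_im (hA : A.IsPositive) (x : H) : (innerA A x x).im = 0 := by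
  have h2 := congrArg Complex.im (innerA_conj hA x x)
  simp only [Complex.conj_im] at h2
  linarith

lemma normA_nonneg (A : H →L[ℂ] H) (x : H) : 0 ≤ normA A x := Real.sqrt_nonneg _

lemma normA_sq (hA : A.IsPositive) (x : H) : normA A x ^ 2 = (innerA A x x).re :=
  Real.sq_sqrt (innerA_self_re_nonneg hA x)

/-- Semi-Cauchy-Schwarz for the positive sesquilinear form. -/
lemma innerA_abs_le (hA : A.IsPositive) (x y : H) :
    ‖innerA A x y‖ ≤ normA A x * normA A y := by
  have hp := innerA_self_re_nonneg hA x
  have hq := innerA_self_re_nonneg hA y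
  have hpq : ‖innerA A x y‖ ^ 2 ≤ (innerA A x x).re * (innerA A y y).re := by
    rcases eq_or_ne (innerA A x y) 0 with h0 | h0
    · rw [h0]; simpa using mul_nonneg hp hq
    · set b := innerA A x y with hb
      have hbabs : (0:ℝ) < ‖b‖ := norm_pos_iff.mpr h0
      set u : ℂ := b / ((‖b‖ : ℝ) : ℂ) with hu
      have hbne : ((‖b‖ : ℝ) : ℂ) ≠ 0 := by exact_mod_cast hbabs.ne'
      have hbb : (starRingEnd ℂ) b * b = (((‖b‖)^2 : ℝ) : ℂ) := by
        rw [mul_comm, Complex.mul_conj, Complex.normSq_eq_norm_sq]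
      have habs2 : ((‖b‖ : ℝ) : ℂ) * ((‖b‖ : ℝ) : ℂ)
          = (((‖b‖)^2 : ℝ) : ℂ) := by push_cast; ring
      have habs2ne : (((‖b‖)^2 : ℝ) : ℂ) ≠ 0 := by
        exact_mod_cast pow_ne_zero 2 hbabs.ne'
      have hub : (starRingEnd ℂ) u * b = ((‖b‖ : ℝ) : ℂ) := by
        rw [hu, map_div₀, Complex.conj_ofReal, div_mul_eq_mul_div, hbb, div_eq_iff hbne,
          ← habs2]
      have hbu : u * (starRingEnd ℂ) b = ((‖b‖ : ℝ) : ℂ) := by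
        have h := congrArg (starRingEnd ℂ) hub
        rw [map_mul, Complex.conj_conj, Complex.conj_ofReal] at h
        exact h
      have huu : (starRingEnd ℂ) u * u = 1 := by
        rw [hu, map_div₀, Complex.conj_ofReal, div_mul_div_comm, hbb, habs2,
          div_self habs2ne]
      have key : ∀ t : ℝ, 0 ≤ (innerA A y y).re * (t*t)
          + (2*‖b‖) * t + (innerA A x x).re := by
        intro t
        have h := innerA_self_re_nonneg hA (x + ((t:ℂ) * u) • y)
        have hexp : innerA A (x + ((t:ℂ)*u) • y) (x + ((t:ℂ)*u) • y)
            = innerA A x x + ((t:ℂ)*u) * innerA A y x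
              + (starRingEnd ℂ) ((t:ℂ)*u) * innerA A x y
              + ((t:ℂ)*u) * (starRingEnd ℂ) ((t:ℂ)*u) * innerA A y y := by
          simp only [innerA, map_add, map_smulₛₗ, map_smul, inner_add_left, inner_add_right,
            inner_smul_left, inner_smul_right, RingHom.id_apply]
          ring
        have hyx : innerA A y x = (starRingEnd ℂ) b := by
          rw [innerA_conj hA y x]
        have e1 : ((t:ℂ)*u) * (starRingEnd ℂ) b = ((t * ‖b‖ : ℝ) : ℂ) := by
          rw [mul_assoc, hbu]; push_cast; ring
        have e2 : (starRingEnd ℂ) ((t:ℂ)*u) * b = ((t * ‖b‖ : ℝ) : ℂ) := by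
          rw [map_mul, Complex.conj_ofReal, mul_assoc, hub]; push_cast; ring
        have e3 : ((t:ℂ)*u) * ((starRingEnd ℂ) ((t:ℂ)*u)) = ((t*t : ℝ) : ℂ) := by
          rw [map_mul, Complex.conj_ofReal]
          calc (t:ℂ)*u * ((t:ℂ) * (starRingEnd ℂ) u)
              = ((t:ℂ) * (t:ℂ)) * ((starRingEnd ℂ) u * u) := by ring
            _ = ((t*t : ℝ) : ℂ) := by rw [huu]; push_cast; ring
        rw [hexp, hyx, e1, e2, e3] at h
        simp only [Complex.add_re, Complex.ofReal_re, Complex.re_ofReal_mul] at h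
        linarith
      have hd := discrim_le_zero key
      rw [discrim] at hd
      nlinarith [hd]
  calc ‖innerA A x y‖
      = Real.sqrt (‖innerA A x y‖^2) := (Real.sqrt_sq (norm_nonneg _)).symm
    _ ≤ Real.sqrt ((innerA A x x).re * (innerA A y y).re) := Real.sqrt_le_sqrt hpq
    _ = normA A x * normA A y := by rw [Real.sqrt_mul hp, normA, normA]

lemma normA_le_norm (hA : A.IsPositive) (x : H) : normA A x ≤ Real.sqrt ‖A‖ * ‖x‖ := by
  have h1 : (innerA A x x).re ≤ ‖A‖ * ‖x‖^2 := by
    calc (innerA A x x).re ≤ ‖innerA A x x‖ := Complex.re_le_norm _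
      _ = ‖(⟪x, A x⟫ : ℂ)‖ := by rw [innerA]
      _ ≤ ‖x‖ * ‖A x‖ := norm_inner_le_norm x (A x)
      _ ≤ ‖x‖ * (‖A‖ * ‖x‖) := by
          exact mul_le_mul_of_nonneg_left (A.le_opNorm x) (norm_nonneg x)
      _ = ‖A‖ * ‖x‖^2 := by ring
  calc normA A x ≤ Real.sqrt (‖A‖ * ‖x‖^2) := Real.sqrt_le_sqrt h1
    _ = Real.sqrt ‖A‖ * ‖x‖ := by
        rw [Real.sqrt_mul (norm_nonneg A), Real.sqrt_sq (norm_nonneg x)]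

lemma normA_smul (hA : A.IsPositive) (c : ℂ) (x : H) :
    normA A (c • x) = ‖c‖ * normA A x := by
  have h : innerA A (c • x) (c • x) = (((‖c‖)^2 : ℝ) : ℂ) * innerA A x x := by
    rw [innerA, innerA, map_smul, inner_smul_left, inner_smul_right]
    rw [← mul_assoc, mul_comm ((starRingEnd ℂ) c) c, Complex.mul_conj, Complex.normSq_eq_norm_sq]
  rw [normA, normA, h, Complex.re_ofReal_mul]
  rw [Real.sqrt_mul (sq_nonneg _), Real.sqrt_sq (norm_nonneg c)]

lemma exists_unit (hA : A.IsPositive) (hA0 : A ≠ 0) : ∃ x : H, normA A x = 1 := by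
  have hy : ∃ y : H, A y ≠ 0 := by
    by_contra h
    push_neg at h
    exact hA0 (ContinuousLinearMap.ext fun y => by simpa using h y)
  obtain ⟨y, hy⟩ := hy
  have hpos : 0 < normA A y := by
    rcases (normA_nonneg A y).lt_or_eq with h | h
    · exact h
    · exfalso
      have hcs := innerA_abs_le hA y (A y)
      rw [← h, zero_mul] at hcs
      have h0 : innerA A y (A y) = 0 := by
        have := norm_nonneg (innerA A y (A y))
        exact norm_eq_zero.mp (le_antisymm hcs this)
      rw [innerA] at h0
      exact hy (inner_self_eq_zero.mp h0)
  refine ⟨(((normA A y)⁻¹ : ℝ) : ℂ) • y, ?_⟩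
  rw [normA_smul hA]
  rw [Complex.norm_real, Real.norm_eq_abs, _root_.abs_of_nonneg (inv_nonneg.mpr (normA_nonneg A y))]
  exact inv_mul_cancel₀ hpos.ne'

lemma adj_flip (hA : A.IsPositive) {S Ss : H →L[ℂ] H}
    (hS : A.comp Ss = (adjoint S).comp A) : A.comp S = (adjoint Ss).comp A := by
  have h := congrArg adjoint hS
  rw [adjoint_comp, adjoint_comp, adjoint_adjoint, hA.isSelfAdjoint.adjoint_eq] at h
  exact h.symm

lemma innerA_shift (hA : A.IsPositive) {S Ss : H →L[ℂ] H}
    (hS : A.comp Ss = (adjoint S).comp A) (x y : H) :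
    innerA A (S x) y = innerA A x (Ss y) := by
  have h1 : A (Ss y) = (adjoint S) (A y) := by
    have := congrFun (congrArg DFunLike.coe hS) y
    simpa using this
  rw [innerA, innerA]
  calc ⟪y, A (S x)⟫ = ⟪A y, S x⟫ := (isym hA y (S x)).symm
    _ = ⟪(adjoint S) (A y), x⟫ := (adjoint_inner_left S x (A y)).symm
    _ = ⟪A (Ss y), x⟫ := by rw [h1]
    _ = ⟪Ss y, A x⟫ := isym hA (Ss y) x

lemma innerA_shift_pow (hA : A.IsPositive) {Q : H →L[ℂ] H}
    (hQ : A.comp Q = (adjoint Q).comp A) (m : ℕ) (x y : H) :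
    innerA A ((Q ^ m) x) y = innerA A x ((Q ^ m) y) := by
  induction m generalizing x with
  | zero => simp
  | succ n ih =>
    have hL : (Q ^ (n+1)) x = (Q ^ n) (Q x) := by
      rw [pow_succ, ContinuousLinearMap.mul_apply]
    have hR : (Q ^ (n+1)) y = Q ((Q ^ n) y) := by
      rw [pow_succ', ContinuousLinearMap.mul_apply]
    rw [hL, hR, ih (Q x), innerA_shift hA hQ]

/-- An operator with an `A`-adjoint is `A`-bounded. -/
lemma normA_map_le (hA : A.IsPositive) {S Ss : H →L[ℂ] H}
    (hS : A.comp Ss = (adjoint S).comp A) (x : H) :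
    normA A (S x) ≤ Real.sqrt ‖Ss.comp S‖ * normA A x := by
  classical
  set Q : H →L[ℂ] H := Ss.comp S with hQdef
  have hS' : A.comp S = (adjoint Ss).comp A := adj_flip hA hS
  have hQ : A.comp Q = (adjoint Q).comp A := by
    rw [hQdef, adjoint_comp]
    calc A ∘L (Ss ∘L S) = (A ∘L Ss) ∘L S := (ContinuousLinearMap.comp_assoc _ _ _).symm
      _ = ((adjoint S) ∘L A) ∘L S := by rw [hS]
      _ = (adjoint S) ∘L (A ∘L S) := ContinuousLinearMap.comp_assoc _ _ _
      _ = (adjoint S) ∘L ((adjoint Ss) ∘L A) := by rw [hS']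
      _ = ((adjoint S) ∘L (adjoint Ss)) ∘L A := (ContinuousLinearMap.comp_assoc _ _ _).symm
  have hQSx : Q x = Ss (S x) := rfl
  -- base step
  have base : normA A (S x) ^ 2 ≤ normA A (Q x) * normA A x := by
    have h1 : (innerA A (S x) (S x)).re = (innerA A (Q x) x).re := by
      rw [innerA_shift hA hS x (S x), ← hQSx, innerA_conj hA x (Q x), Complex.conj_re]
    calc normA A (S x) ^ 2 = (innerA A (S x) (S x)).re := normA_sq hA _
      _ = (innerA A (Q x) x).re := h1
      _ ≤ ‖innerA A (Q x) x‖ := Complex.re_le_norm _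
      _ ≤ normA A (Q x) * normA A x := innerA_abs_le hA _ _
  -- doubling step
  have step : ∀ m : ℕ, normA A ((Q ^ m) x) ^ 2 ≤ normA A ((Q ^ (2*m)) x) * normA A x := by
    intro m
    have h2 : (Q ^ (2*m)) x = (Q ^ m) ((Q ^ m) x) := by
      rw [two_mul, pow_add, ContinuousLinearMap.mul_apply]
    have h1 : (innerA A ((Q ^ m) x) ((Q ^ m) x)).re = (innerA A ((Q ^ (2*m)) x) x).re := by
      rw [innerA_shift_pow hA hQ m x ((Q ^ m) x), ← h2,
        innerA_conj hA x ((Q ^ (2*m)) x), Complex.conj_re]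
    calc normA A ((Q ^ m) x) ^ 2 = (innerA A ((Q ^ m) x) ((Q ^ m) x)).re := normA_sq hA _
      _ = (innerA A ((Q ^ (2*m)) x) x).re := h1
      _ ≤ ‖innerA A ((Q ^ (2*m)) x) x‖ := Complex.re_le_norm _
      _ ≤ normA A ((Q ^ (2*m)) x) * normA A x := innerA_abs_le hA _ _
  -- crude growth bound
  have hQm : ∀ m : ℕ, 0 < m → normA A ((Q ^ m) x) ≤ Real.sqrt ‖A‖ * ‖x‖ * ‖Q‖ ^ m := by
    intro m hm
    calc normA A ((Q ^ m) x) ≤ Real.sqrt ‖A‖ * ‖(Q ^ m) x‖ := normA_le_norm hA _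
      _ ≤ Real.sqrt ‖A‖ * (‖Q ^ m‖ * ‖x‖) := by
          exact mul_le_mul_of_nonneg_left ((Q ^ m).le_opNorm x) (Real.sqrt_nonneg _)
      _ ≤ Real.sqrt ‖A‖ * (‖Q‖ ^ m * ‖x‖) := by
          refine mul_le_mul_of_nonneg_left ?_ (Real.sqrt_nonneg _)
          exact mul_le_mul_of_nonneg_right (norm_pow_le' Q hm) (norm_nonneg x)
      _ = Real.sqrt ‖A‖ * ‖x‖ * ‖Q‖ ^ m := by ring
  rcases (normA_nonneg A x).lt_or_eq with hr | hr
  swap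
  · -- normA A x = 0
    have h0 : normA A (S x) ^ 2 ≤ 0 := by
      have := base
      rw [← hr, mul_zero] at this
      exact this
    have : normA A (S x) = 0 := by nlinarith [normA_nonneg A (S x)]
    rw [this, ← hr, mul_zero]
  · -- normA A x > 0
    set t := normA A (S x) with ht
    set r := normA A x with hrr
    set c := ‖Q‖ with hc
    have ht0 : 0 ≤ t := normA_nonneg A (S x)
    have hc0 : 0 ≤ c := norm_nonneg Q
    -- main claim: t^2 ≤ c * r^2
    have hts : t ^ 2 ≤ c * r ^ 2 := by
      rcases hc0.lt_or_eq with hcpos | hczero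
      swap
      · -- c = 0
        have h1 := hQm 1 one_pos
        rw [← hczero] at h1
        simp only [pow_one, mul_zero] at h1
        have hQx0 : normA A ((Q ^ 1) x) = 0 :=
          le_antisymm h1 (normA_nonneg A _)
        rw [pow_one] at hQx0
        have := base
        rw [hQx0, zero_mul] at this
        have ht' : t = 0 := by nlinarith
        rw [ht', ← hczero]
        nlinarith [sq_nonneg r]
      · by_contra hcon
        push_neg at hcon
        -- iterated inequality
        have key2 : ∀ n : ℕ, t ^ (2^(n+1)) * r ≤ normA A ((Q ^ (2^n)) x) * r ^ (2^(n+1)) := by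
          intro n
          induction n with
          | zero =>
            simpa [pow_one] using
              mul_le_mul_of_nonneg_right base hr.le |>.trans_eq (by ring)
          | succ n ih =>
            set u := normA A ((Q ^ (2^n)) x) with hu
            set v := normA A ((Q ^ (2^(n+1))) x) with hv
            have h2 : u ^ 2 ≤ v * r := by
              have h3 := step (2^n)
              rw [show 2 * 2^n = 2^(n+1) by rw [pow_succ]; ring] at h3
              exact h3
            have hL : 0 ≤ t ^ (2^(n+1)) * r := by positivity
            have hsq := mul_le_mul ih ih hL (le_trans hL ih)
            have e1 : (t^(2^(n+1)) * r) * (t^(2^(n+1)) * r) = t^(2^(n+2)) * r * r := by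
              rw [show (2:ℕ)^(n+2) = 2^(n+1) + 2^(n+1) by rw [pow_succ 2 (n+1)]; ring,
                pow_add]
              ring
            have e2 : (u * r^(2^(n+1))) * (u * r^(2^(n+1))) = u^2 * r^(2^(n+2)) := by
              rw [show (2:ℕ)^(n+2) = 2^(n+1) + 2^(n+1) by rw [pow_succ 2 (n+1)]; ring,
                pow_add]
              ring
            rw [e1, e2] at hsq
            have h3 : u^2 * r^(2^(n+2)) ≤ (v * r) * r^(2^(n+2)) :=
              mul_le_mul_of_nonneg_right h2 (by positivity)
            refine le_of_mul_le_mul_right ?_ hr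
            calc t^(2^(n+2)) * r * r ≤ u^2 * r^(2^(n+2)) := hsq
              _ ≤ (v * r) * r^(2^(n+2)) := h3
              _ = v * r^(2^(n+2)) * r := by ring
        -- contradiction via unbounded powers
        set q := t^2 / (c * r^2) with hqq
        have hcr : 0 < c * r^2 := by positivity
        have hq1 : 1 < q := (one_lt_div hcr).mpr hcon
        set K := Real.sqrt ‖A‖ * ‖x‖ / r with hK
        have hbound : ∀ n : ℕ, q ^ (2^n) ≤ K := by
          intro n
          have h1 := key2 n
          have h2 := hQm (2^n) (pow_pos two_pos n)
          have h3 : t ^ (2^(n+1)) * r ≤ Real.sqrt ‖A‖ * ‖x‖ * c^(2^n) * r^(2^(n+1)) := by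
            calc t ^ (2^(n+1)) * r ≤ normA A ((Q ^ (2^n)) x) * r^(2^(n+1)) := h1
              _ ≤ (Real.sqrt ‖A‖ * ‖x‖ * c^(2^n)) * r^(2^(n+1)) :=
                  mul_le_mul_of_nonneg_right h2 (by positivity)
              _ = Real.sqrt ‖A‖ * ‖x‖ * c^(2^n) * r^(2^(n+1)) := by ring
          have e1 : t ^ (2^(n+1)) = (t^2)^(2^n) := by
            rw [← pow_mul, show 2 * 2^n = 2^(n+1) by rw [pow_succ]; ring]
          have e2 : r ^ (2^(n+1)) = (r^2)^(2^n) := by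
            rw [← pow_mul, show 2 * 2^n = 2^(n+1) by rw [pow_succ]; ring]
          rw [e1, e2] at h3
          rw [hqq, div_pow, div_le_iff₀ (by positivity), hK, div_mul_eq_mul_div,
            le_div_iff₀ hr]
          calc (t^2)^(2^n) * r ≤ Real.sqrt ‖A‖ * ‖x‖ * c^(2^n) * (r^2)^(2^n) := h3
            _ = Real.sqrt ‖A‖ * ‖x‖ * (c * r^2)^(2^n) := by rw [mul_pow]; ring
        obtain ⟨n, hn⟩ := pow_unbounded_of_one_lt K hq1
        have hmono : q ^ n ≤ q ^ (2^n) :=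
          pow_le_pow_right₀ hq1.le (Nat.lt_two_pow_self (n := n)).le
        exact absurd (le_trans hmono (hbound n)) (not_le.mpr hn)
    -- conclude
    have : t ≤ Real.sqrt (c * r^2) := Real.le_sqrt_of_sq_le hts
    rwa [Real.sqrt_mul hc0, Real.sqrt_sq hr.le] at this

lemma bddAbove_wA_set (hA : A.IsPositive) {S Ss : H →L[ℂ] H}
    (hS : A.comp Ss = (adjoint S).comp A) :
    BddAbove {r : ℝ | ∃ x : H, normA A x = 1 ∧ r = ‖innerA A (S x) x‖} := by
  refine ⟨Real.sqrt ‖Ss.comp S‖, ?_⟩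
  rintro r ⟨x, hx, rfl⟩
  calc ‖innerA A (S x) x‖ ≤ normA A (S x) * normA A x := innerA_abs_le hA _ _
    _ = normA A (S x) := by rw [hx, mul_one]
    _ ≤ Real.sqrt ‖Ss.comp S‖ * normA A x := normA_map_le hA hS x
    _ = Real.sqrt ‖Ss.comp S‖ := by rw [hx, mul_one]

lemma bddAbove_op_set (hA : A.IsPositive) {S Ss : H →L[ℂ] H}
    (hS : A.comp Ss = (adjoint S).comp A) :
    BddAbove {r : ℝ | ∃ x : H, normA A x = 1 ∧ r = normA A (S x)} := by
  refine ⟨Real.sqrt ‖Ss.comp S‖, ?_⟩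
  rintro r ⟨x, hx, rfl⟩
  calc normA A (S x) ≤ Real.sqrt ‖Ss.comp S‖ * normA A x := normA_map_le hA hS x
    _ = Real.sqrt ‖Ss.comp S‖ := by rw [hx, mul_one]

lemma cs2 {p q r s : ℝ} (hp : 0 ≤ p) (hq : 0 ≤ q) (hr : 0 ≤ r) (hs : 0 ≤ s) :
    p*q + r*s ≤ Real.sqrt (p^2+r^2) * Real.sqrt (q^2+s^2) := by
  have h1 : (p*q+r*s)^2 ≤ (p^2+r^2)*(q^2+s^2) := by nlinarith [sq_nonneg (p*s - r*q)]
  calc p*q+r*s ≤ Real.sqrt ((p*q+r*s)^2) := by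
        rw [Real.sqrt_sq (by positivity)]
    _ ≤ Real.sqrt ((p^2+r^2)*(q^2+s^2)) := Real.sqrt_le_sqrt h1
    _ = _ := Real.sqrt_mul (by positivity) _

/-- Expansion of the `A`-inner product of two projections. -/
lemma innerA_sub_smul (hA : A.IsPositive) (v w x : H) (cv cw : ℂ) :
    innerA A (v - cv • x) (w - cw • x)
      = innerA A v w - (starRingEnd ℂ) cw * innerA A v x - cv * innerA A x w
        + cv * (starRingEnd ℂ) cw * innerA A x x := by
  simp only [innerA, map_sub, map_smul, inner_sub_left, inner_sub_right,
    inner_smul_left, inner_smul_right]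
  ring

lemma habs_sub_le (u v : ℂ) : ‖u - v‖ ≤ ‖u‖ + ‖v‖ := by
  rw [sub_eq_add_neg]
  exact (norm_add_le u (-v)).trans (by rw [norm_neg])

set_option maxHeartbeats 1000000 in
lemma main (A : H →L[ℂ] H) (hA : A.IsPositive) (hA0 : A ≠ 0)
    (T Ts : H →L[ℂ] H)
    (hT : A.comp Ts = (ContinuousLinearMap.adjoint T).comp A)
    (α : ℂ) (hα : α ≠ 0) :
    (wA A T)^2
      ≤ ((1/2) * max 1 (‖1 - α‖) * opNormA A (Ts * T + T * Ts)
          + wA A (T * T)) / ‖α‖ := by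
  classical
  have hT' : A.comp T = (adjoint Ts).comp A := adj_flip hA hT
  have hT2 : A.comp (Ts * Ts) = (adjoint (T * T)).comp A := by
    have h1 : (T * T : H →L[ℂ] H) = T ∘L T := rfl
    have h2 : (Ts * Ts : H →L[ℂ] H) = Ts ∘L Ts := rfl
    rw [h1, h2, adjoint_comp]
    calc A ∘L (Ts ∘L Ts) = (A ∘L Ts) ∘L Ts := (ContinuousLinearMap.comp_assoc _ _ _).symm
      _ = ((adjoint T) ∘L A) ∘L Ts := by rw [hT]
      _ = (adjoint T) ∘L (A ∘L Ts) := ContinuousLinearMap.comp_assoc _ _ _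
      _ = (adjoint T) ∘L ((adjoint T) ∘L A) := by rw [hT]
      _ = ((adjoint T) ∘L (adjoint T)) ∘L A := (ContinuousLinearMap.comp_assoc _ _ _).symm
  have hD : A.comp (Ts * T + T * Ts) = (adjoint (Ts * T + T * Ts)).comp A := by
    have e1 : A ∘L (Ts ∘L T) = (adjoint (Ts ∘L T)) ∘L A := by
      rw [adjoint_comp]
      calc A ∘L (Ts ∘L T) = (A ∘L Ts) ∘L T := (ContinuousLinearMap.comp_assoc _ _ _).symm
        _ = ((adjoint T) ∘L A) ∘L T := by rw [hT]
        _ = (adjoint T) ∘L (A ∘L T) := ContinuousLinearMap.comp_assoc _ _ _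
        _ = (adjoint T) ∘L ((adjoint Ts) ∘L A) := by rw [hT']
        _ = ((adjoint T) ∘L (adjoint Ts)) ∘L A := (ContinuousLinearMap.comp_assoc _ _ _).symm
    have e2 : A ∘L (T ∘L Ts) = (adjoint (T ∘L Ts)) ∘L A := by
      rw [adjoint_comp]
      calc A ∘L (T ∘L Ts) = (A ∘L T) ∘L Ts := (ContinuousLinearMap.comp_assoc _ _ _).symm
        _ = ((adjoint Ts) ∘L A) ∘L Ts := by rw [hT']
        _ = (adjoint Ts) ∘L (A ∘L Ts) := ContinuousLinearMap.comp_assoc _ _ _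
        _ = (adjoint Ts) ∘L ((adjoint T) ∘L A) := by rw [hT]
        _ = ((adjoint Ts) ∘L (adjoint T)) ∘L A := (ContinuousLinearMap.comp_assoc _ _ _).symm
    have hsum : (Ts * T + T * Ts : H →L[ℂ] H) = (Ts ∘L T) + (T ∘L Ts) := rfl
    rw [hsum, ContinuousLinearMap.comp_add, e1, e2, map_add,
      ContinuousLinearMap.add_comp]
  set m := max 1 (‖1 - α‖) with hm
  set N := (1/2) * m * opNormA A (Ts * T + T * Ts) + wA A (T * T) with hN
  have hm1 : (1:ℝ) ≤ m := le_max_left _ _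
  have hm0 : (0:ℝ) ≤ m := le_trans zero_le_one hm1
  obtain ⟨x0, hx0⟩ := exists_unit hA hA0
  have habsα : 0 < ‖α‖ := norm_pos_iff.mpr hα
  have bddT : BddAbove {r : ℝ | ∃ x : H, normA A x = 1 ∧
      r = ‖innerA A (T x) x‖} := bddAbove_wA_set hA hT
  have bddT2 : BddAbove {r : ℝ | ∃ x : H, normA A x = 1 ∧
      r = ‖innerA A ((T * T) x) x‖} := bddAbove_wA_set hA hT2
  have bddD : BddAbove {r : ℝ | ∃ x : H, normA A x = 1 ∧
      r = normA A ((Ts * T + T * Ts) x)} := bddAbove_op_set hA hD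
  have hpt : ∀ x : H, normA A x = 1 →
      ‖α‖ * ‖innerA A (T x) x‖ ^ 2 ≤ N := by
    intro x hx
    have hxre : (innerA A x x).re = 1 := by
      have h := normA_sq hA x
      rw [hx] at h
      simpa using h.symm
    have hxx : innerA A x x = 1 := by
      apply Complex.ext
      · simpa using hxre
      · simpa using innerA_self_im hA x
    set β := innerA A (T x) x with hβ
    have hxa : innerA A x (T x) = (starRingEnd ℂ) β := by
      rw [innerA_conj hA x (T x), ← hβ]
    have hγ : innerA A (Ts x) x = (starRingEnd ℂ) β := by
      rw [innerA_shift hA hT' x x]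
      exact hxa
    have hxb : innerA A x (Ts x) = β := by
      rw [innerA_conj hA x (Ts x), hγ, Complex.conj_conj]
    have hTTx : (T * T) x = T (T x) := rfl
    have hab : innerA A (T x) (Ts x) = innerA A ((T * T) x) x := by
      rw [hTTx, innerA_shift hA hT (T x) x]
    set a' := T x - β • x with ha'
    set b' := Ts x - (starRingEnd ℂ) β • x with hb'
    have hproj : innerA A a' b' = innerA A ((T * T) x) x - β ^ 2 := by
      rw [ha', hb', innerA_sub_smul hA, Complex.conj_conj, hab, hxb, hxx, ← hβ]
      ring
    have hdeca : normA A (T x) ^ 2 = ‖β‖ ^ 2 + normA A a' ^ 2 := by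
      have h1 : innerA A a' a' = innerA A (T x) (T x) - β * (starRingEnd ℂ) β := by
        rw [ha', innerA_sub_smul hA, hxa, hxx, ← hβ]
        ring
      have h3 : (β * (starRingEnd ℂ) β).re = ‖β‖ ^ 2 := by
        rw [Complex.mul_conj, Complex.normSq_eq_norm_sq, Complex.ofReal_re]
      have h4 : (innerA A a' a').re = (innerA A (T x) (T x)).re - ‖β‖ ^ 2 := by
        rw [h1, Complex.sub_re, h3]
      rw [normA_sq hA, normA_sq hA, h4]
      ring
    have hdecb : normA A (Ts x) ^ 2 = ‖β‖ ^ 2 + normA A b' ^ 2 := by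
      have h1 : innerA A b' b' = innerA A (Ts x) (Ts x) - β * (starRingEnd ℂ) β := by
        rw [hb', innerA_sub_smul hA, Complex.conj_conj, hγ, hxb, hxx]
        ring
      have h3 : (β * (starRingEnd ℂ) β).re = ‖β‖ ^ 2 := by
        rw [Complex.mul_conj, Complex.normSq_eq_norm_sq, Complex.ofReal_re]
      have h4 : (innerA A b' b').re = (innerA A (Ts x) (Ts x)).re - ‖β‖ ^ 2 := by
        rw [h1, Complex.sub_re, h3]
      rw [normA_sq hA, normA_sq hA, h4]
      ring
    have hDx : (Ts * T + T * Ts) x = Ts (T x) + T (Ts x) := rfl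
    have hD1 : innerA A (Ts (T x)) x = innerA A (T x) (T x) := innerA_shift hA hT' (T x) x
    have hD2 : innerA A (T (Ts x)) x = innerA A (Ts x) (Ts x) := innerA_shift hA hT (Ts x) x
    have hDre : normA A (T x) ^ 2 + normA A (Ts x) ^ 2
        = (innerA A ((Ts * T + T * Ts) x) x).re := by
      have hadd : innerA A ((Ts * T + T * Ts) x) x
          = innerA A (Ts (T x)) x + innerA A (T (Ts x)) x := by
        rw [hDx]
        simp [innerA, map_add, inner_add_right]
      rw [hadd, hD1, hD2, Complex.add_re, normA_sq hA, normA_sq hA]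
    have s3 : ‖innerA A ((T * T) x) x‖ ≤ wA A (T * T) :=
      le_csSup bddT2 ⟨x, hx, rfl⟩
    have s6 : normA A ((Ts * T + T * Ts) x) ≤ opNormA A (Ts * T + T * Ts) :=
      le_csSup bddD ⟨x, hx, rfl⟩
    have s6' : normA A (T x) ^ 2 + normA A (Ts x) ^ 2 ≤ opNormA A (Ts * T + T * Ts) := by
      calc normA A (T x) ^ 2 + normA A (Ts x) ^ 2
          = (innerA A ((Ts * T + T * Ts) x) x).re := hDre
        _ ≤ ‖innerA A ((Ts * T + T * Ts) x) x‖ := Complex.re_le_norm _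
        _ ≤ normA A ((Ts * T + T * Ts) x) * normA A x := innerA_abs_le hA _ _
        _ = normA A ((Ts * T + T * Ts) x) := by rw [hx, mul_one]
        _ ≤ opNormA A (Ts * T + T * Ts) := s6
    have hid : α * β ^ 2 = innerA A ((T * T) x) x + (α - 1) * β ^ 2 - innerA A a' b' := by
      rw [hproj]
      ring
    have s2 : ‖α - 1‖ ≤ m := by
      have h : ‖α - 1‖ = ‖1 - α‖ := by
        rw [← neg_sub, norm_neg]
      rw [h, hm]
      exact le_max_right _ _
    have scs : ‖innerA A a' b'‖ ≤ normA A a' * normA A b' :=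
      innerA_abs_le hA _ _
    have schain : ‖α‖ * ‖β‖ ^ 2
        ≤ wA A (T * T) + m * (‖β‖ * ‖β‖ + normA A a' * normA A b') := by
      have step1 : ‖α‖ * ‖β‖ ^ 2
          ≤ ‖innerA A ((T * T) x) x‖ + ‖α - 1‖ * ‖β‖ ^ 2
            + ‖innerA A a' b'‖ := by
        calc ‖α‖ * ‖β‖ ^ 2 = ‖α * β ^ 2‖ := by
              rw [norm_mul, norm_pow]
          _ = ‖innerA A ((T * T) x) x + (α - 1) * β ^ 2 - innerA A a' b'‖ := by
              rw [hid]
          _ ≤ ‖innerA A ((T * T) x) x + (α - 1) * β ^ 2‖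
              + ‖innerA A a' b'‖ := habs_sub_le _ _
          _ ≤ ‖innerA A ((T * T) x) x‖ + ‖(α - 1) * β ^ 2‖
              + ‖innerA A a' b'‖ :=
              add_le_add_left (norm_add_le _ _) _
          _ = ‖innerA A ((T * T) x) x‖ + ‖α - 1‖ * ‖β‖ ^ 2
              + ‖innerA A a' b'‖ := by rw [norm_mul, norm_pow]
      have h5 : normA A a' * normA A b' ≤ m * (normA A a' * normA A b') :=
        le_mul_of_one_le_left (mul_nonneg (normA_nonneg A a') (normA_nonneg A b')) hm1
      have h6 : ‖α - 1‖ * ‖β‖ ^ 2 ≤ m * ‖β‖ ^ 2 :=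
        mul_le_mul_of_nonneg_right s2 (by positivity)
      calc ‖α‖ * ‖β‖ ^ 2
          ≤ ‖innerA A ((T * T) x) x‖ + ‖α - 1‖ * ‖β‖ ^ 2
            + ‖innerA A a' b'‖ := step1
        _ ≤ wA A (T * T) + m * ‖β‖ ^ 2 + m * (normA A a' * normA A b') :=
            add_le_add (add_le_add s3 h6) (le_trans scs h5)
        _ = wA A (T * T) + m * (‖β‖ * ‖β‖ + normA A a' * normA A b') := by
            ring
    have s4 : ‖β‖ * ‖β‖ + normA A a' * normA A b'
        ≤ normA A (T x) * normA A (Ts x) := by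
      have h := cs2 (norm_nonneg β) (norm_nonneg β)
        (normA_nonneg A a') (normA_nonneg A b')
      have e1 : Real.sqrt (‖β‖ ^ 2 + normA A a' ^ 2) = normA A (T x) := by
        rw [← hdeca, Real.sqrt_sq (normA_nonneg A (T x))]
      have e2 : Real.sqrt (‖β‖ ^ 2 + normA A b' ^ 2) = normA A (Ts x) := by
        rw [← hdecb, Real.sqrt_sq (normA_nonneg A (Ts x))]
      calc ‖β‖ * ‖β‖ + normA A a' * normA A b'
          ≤ Real.sqrt (‖β‖ ^ 2 + normA A a' ^ 2)
            * Real.sqrt (‖β‖ ^ 2 + normA A b' ^ 2) := h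
        _ = normA A (T x) * normA A (Ts x) := by rw [e1, e2]
    have s5 : normA A (T x) * normA A (Ts x)
        ≤ (1/2) * (normA A (T x) ^ 2 + normA A (Ts x) ^ 2) := by
      nlinarith [sq_nonneg (normA A (T x) - normA A (Ts x))]
    calc ‖α‖ * ‖β‖ ^ 2
        ≤ wA A (T * T) + m * (‖β‖ * ‖β‖ + normA A a' * normA A b') :=
          schain
      _ ≤ wA A (T * T) + m * (normA A (T x) * normA A (Ts x)) :=
          add_le_add_right (mul_le_mul_of_nonneg_left s4 hm0) _
      _ ≤ wA A (T * T) + m * ((1/2) * (normA A (T x) ^ 2 + normA A (Ts x) ^ 2)) :=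
          add_le_add_right (mul_le_mul_of_nonneg_left s5 hm0) _
      _ ≤ wA A (T * T) + m * ((1/2) * opNormA A (Ts * T + T * Ts)) := by
          refine add_le_add_right (mul_le_mul_of_nonneg_left ?_ hm0) _
          linarith [s6']
      _ = N := by rw [hN]; ring
  have hsq : ∀ x : H, normA A x = 1 →
      ‖innerA A (T x) x‖ ≤ Real.sqrt (N / ‖α‖) := by
    intro x hx
    apply Real.le_sqrt_of_sq_le
    rw [le_div_iff₀ habsα]
    calc ‖innerA A (T x) x‖ ^ 2 * ‖α‖
        = ‖α‖ * ‖innerA A (T x) x‖ ^ 2 := by ring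
      _ ≤ N := hpt x hx
  have hup : wA A T ≤ Real.sqrt (N / ‖α‖) := by
    refine csSup_le ⟨‖innerA A (T x0) x0‖, ⟨x0, hx0, rfl⟩⟩ ?_
    rintro r ⟨x, hx, rfl⟩
    exact hsq x hx
  have hnn : 0 ≤ wA A T :=
    le_trans (norm_nonneg _) (le_csSup bddT ⟨x0, hx0, rfl⟩)
  have hNd : 0 ≤ N / ‖α‖ := by
    have h1 := hpt x0 hx0
    have h2 : 0 ≤ N := le_trans (by positivity) h1
    positivity
  calc (wA A T) ^ 2 ≤ (Real.sqrt (N / ‖α‖)) ^ 2 :=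
      pow_le_pow_left₀ hnn hup 2
    _ = N / ‖α‖ := Real.sq_sqrt hNd

end Stmt12Aux

theorem stmt12 (A : H →L[ℂ] H) (hA : A.IsPositive) (hA0 : A ≠ 0)
    (T Ts : H →L[ℂ] H)
    (hT : A.comp Ts = (ContinuousLinearMap.adjoint T).comp A)
    (α : ℂ) (hα : α ≠ 0) :
    (wA A T)^2
      ≤ ((1/2) * max 1 (‖1 - α‖) * opNormA A (Ts * T + T * Ts)
          + wA A (T * T)) / ‖α‖ :=
  Stmt12Aux.main A hA hA0 T Ts hT α hα
end
end

section
/- Let B and C be bounded linear operators on H admitting A-adjoints. Then max{ (w_A(B))² + (c_A(C))², (w_A(C))² + (c_A(B))² } ≤ (w_{A,e}(B,C))². -/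
noncomputable section

open scoped ComplexInnerProductSpace

variable {H : Type*} [NormedAddCommGroup H] [InnerProductSpace ℂ H] [CompleteSpace H]

namespace Stmt15Aux

open ContinuousLinearMap

theorem key_bound (P S : H →L[ℂ] H) (hPsa : IsSelfAdjoint P)
    (hS : (P*P) * S = (adjoint S) * (P*P)) (x : H) (hx : ‖P x‖ ≤ 1) :
    ‖P (S x)‖ ≤ ‖S‖ := by
  have hPsym : ∀ u v : H, ⟪P u, v⟫ = ⟪u, P v⟫ :=
    fun u v => (ContinuousLinearMap.isSelfAdjoint_iff_isSymmetric.mp hPsa) u v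
  have hpow : ∀ k : ℕ, (P*P) * S^k = (adjoint S)^k * (P*P) := by
    intro k
    induction k with
    | zero => simp
    | succ n ih =>
      rw [pow_succ, pow_succ', ← mul_assoc, ih, mul_assoc, hS, ← mul_assoc]
      congr 1
      exact ((Commute.refl (adjoint S)).pow_left n).eq
  have step : ∀ k : ℕ, ‖P ((S^k) x)‖^2 ≤ ‖P x‖ * ‖P ((S^(2*k)) x)‖ := by
    intro k
    have h1 : (‖P ((S^k) x)‖:ℝ)^2 = (⟪P ((S^(2*k)) x), P x⟫ : ℂ).re := by
      have e1 : (⟪P ((S^k) x), P ((S^k) x)⟫ : ℂ) = ⟪P ((S^(2*k)) x), P x⟫ := by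
        rw [hPsym]
        have : P (P ((S^k) x)) = ((P*P) * S^k) x := rfl
        rw [this, hpow k]
        have : ((adjoint S)^k * (P*P)) x = (adjoint (S^k)) (P (P x)) := by
          simp [ContinuousLinearMap.mul_apply, ← star_eq_adjoint, ← star_pow]
        rw [this, adjoint_inner_right, hPsym]
        congr 1
        have : (S^k) ((S^k) x) = (S^k * S^k) x := rfl
        rw [this, ← pow_add, two_mul]
      rw [← e1, inner_self_eq_norm_sq_to_K]
      simp [← Complex.ofReal_pow]
    rw [h1]
    calc (⟪P ((S^(2*k)) x), P x⟫ : ℂ).re ≤ ‖(⟪P ((S^(2*k)) x), P x⟫ : ℂ)‖ := Complex.re_le_norm _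
      _ ≤ ‖P ((S^(2*k)) x)‖ * ‖P x‖ := norm_inner_le_norm _ _
      _ = ‖P x‖ * ‖P ((S^(2*k)) x)‖ := mul_comm _ _
  set b : ℕ → ℝ := fun n => ‖P ((S^(2^n)) x)‖ with hb
  have hbnn : ∀ n, 0 ≤ b n := fun n => norm_nonneg _
  have hstep : ∀ n, b n ^ 2 ≤ b (n+1) := by
    intro n
    calc b n ^2 ≤ ‖P x‖ * ‖P ((S^(2*2^n)) x)‖ := step (2^n)
      _ ≤ 1 * ‖P ((S^(2*2^n)) x)‖ := by
          apply mul_le_mul_of_nonneg_right hx (norm_nonneg _)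
      _ = b (n+1) := by rw [one_mul, hb]; simp [pow_succ, mul_comm]
  have hiter : ∀ n, b 0 ^ (2^n) ≤ b n := by
    intro n
    induction n with
    | zero => simp
    | succ n ih =>
      calc b 0 ^ (2^(n+1)) = (b 0 ^ (2^n))^2 := by rw [← pow_mul, pow_succ]
        _ ≤ (b n)^2 := by
            apply pow_le_pow_left₀ (pow_nonneg (hbnn 0) _) ih
        _ ≤ b (n+1) := hstep n
  have hub : ∀ n, b n ≤ ‖P‖ * ‖x‖ * ‖S‖^(2^n) := by
    intro n
    calc b n ≤ ‖P‖ * ‖(S^(2^n)) x‖ := P.le_opNorm _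
      _ ≤ ‖P‖ * (‖S^(2^n)‖ * ‖x‖) := by
          apply mul_le_mul_of_nonneg_left ((S^(2^n)).le_opNorm x) (norm_nonneg _)
      _ ≤ ‖P‖ * (‖S‖^(2^n) * ‖x‖) := by
          apply mul_le_mul_of_nonneg_left _ (norm_nonneg _)
          apply mul_le_mul_of_nonneg_right (norm_pow_le' S (Nat.pow_pos two_pos)) (norm_nonneg _)
      _ = ‖P‖ * ‖x‖ * ‖S‖^(2^n) := by ring
  by_contra hcon
  push_neg at hcon
  have hb0 : b 0 = ‖P (S x)‖ := by simp [hb]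
  rw [← hb0] at hcon
  have hSnn : (0:ℝ) ≤ ‖S‖ := norm_nonneg _
  rcases eq_or_lt_of_le hSnn with hS0 | hS0
  · have := hub 0
    rw [← hS0] at this
    simp at this
    have : b 0 ≤ 0 := le_trans this (by positivity)
    exact absurd hcon (not_lt.2 (le_trans this hSnn))
  · set q := b 0 / ‖S‖ with hq
    have hq1 : 1 < q := (one_lt_div hS0).2 hcon
    obtain ⟨n, hn⟩ := pow_unbounded_of_one_lt (‖P‖ * ‖x‖) hq1
    have h1 : b 0 ^ (2^n) ≤ ‖P‖ * ‖x‖ * ‖S‖^(2^n) := le_trans (hiter n) (hub n)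
    have h2 : q ^ (2^n) ≤ ‖P‖ * ‖x‖ := by
      rw [hq, div_pow, div_le_iff₀ (by positivity)]
      exact h1
    have h3 : q ^ n ≤ q ^ (2^n) :=
      pow_le_pow_right₀ (le_of_lt hq1) (le_of_lt (Nat.lt_two_pow_self (n := n)))
    linarith

/-- Purely set-theoretic part. -/
theorem aux_sets (A B C : H →L[ℂ] H) (W : ℝ)
    (hne : ∃ x : H, normA A x = 1)
    (hkey : ∀ x : H, normA A x = 1 →
      (‖innerA A (B x) x‖)^2 + (‖innerA A (C x) x‖)^2 ≤ W) :
    wA A B ^ 2 + cA A C ^ 2 ≤ W := by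
  obtain ⟨x0, hx0⟩ := hne
  have hc0 : 0 ≤ cA A C := by
    apply Real.sInf_nonneg
    rintro r ⟨x, hx, rfl⟩
    positivity
  have hcle : ∀ x : H, normA A x = 1 → cA A C ≤ ‖innerA A (C x) x‖ := by
    intro x hx
    exact csInf_le ⟨0, by rintro r ⟨y, hy, rfl⟩; positivity⟩ ⟨x, hx, rfl⟩
  have hW0 : cA A C ^ 2 ≤ W := by
    have h1 := hkey x0 hx0
    have h2 := hcle x0 hx0
    have h3 : (0:ℝ) ≤ ‖innerA A (B x0) x0‖ := by positivity
    nlinarith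
  have hsub : (0:ℝ) ≤ W - cA A C ^ 2 := by linarith
  have hub : ∀ x : H, normA A x = 1 →
      ‖innerA A (B x) x‖ ≤ Real.sqrt (W - cA A C ^ 2) := by
    intro x hx
    rw [Real.le_sqrt (by positivity) hsub]
    have h1 := hkey x hx
    have h2 : cA A C ^ 2 ≤ ‖innerA A (C x) x‖ ^ 2 :=
      pow_le_pow_left₀ hc0 (hcle x hx) 2
    linarith
  have hw : wA A B ≤ Real.sqrt (W - cA A C ^ 2) := by
    apply Real.sSup_le _ (Real.sqrt_nonneg _)
    rintro r ⟨x, hx, rfl⟩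
    exact hub x hx
  have hw0 : 0 ≤ wA A B := by
    apply Real.sSup_nonneg
    rintro r ⟨x, hx, rfl⟩
    positivity
  have := pow_le_pow_left₀ hw0 hw 2
  rw [Real.sq_sqrt hsub] at this
  linarith

end Stmt15Aux

set_option maxHeartbeats 1000000 in
set_option synthInstance.maxHeartbeats 400000 in
theorem stmt15 (A : H →L[ℂ] H) (hA : A.IsPositive) (hA0 : A ≠ 0)
    (B C Bs Cs : H →L[ℂ] H)
    (hB : A.comp Bs = (ContinuousLinearMap.adjoint B).comp A)
    (hC : A.comp Cs = (ContinuousLinearMap.adjoint C).comp A) :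
    max ((wA A B)^2 + (cA A C)^2) ((wA A C)^2 + (cA A B)^2) ≤ (wAe A B C)^2 := by
  open ContinuousLinearMap in
  -- square root of A
  have h0 : (0:H →L[ℂ] H) ≤ A := (ContinuousLinearMap.nonneg_iff_isPositive A).2 hA
  set P := CFC.sqrt A with hPdef
  have hPpos : 0 ≤ P := CFC.sqrt_nonneg A
  have hP2 : P * P = A := by
    have := CFC.sq_sqrt A h0
    rwa [pow_two] at this
  have hPsa : IsSelfAdjoint P := IsSelfAdjoint.of_nonneg hPpos
  have hAsa : IsSelfAdjoint A := hA.isSelfAdjoint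
  have hPsym : ∀ u v : H, ⟪P u, v⟫ = ⟪u, P v⟫ :=
    fun u v => (ContinuousLinearMap.isSelfAdjoint_iff_isSymmetric.mp hPsa) u v
  -- normA = ‖P x‖
  have hnorm : ∀ x : H, normA A x = ‖P x‖ := by
    intro x
    unfold normA innerA
    have hAx : A x = P (P x) := by rw [← hP2]; rfl
    rw [hAx, ← hPsym x (P x), inner_self_eq_norm_sq_to_K]
    simp [← Complex.ofReal_pow]
  -- innerA identity
  have hinner : ∀ (T : H →L[ℂ] H) (x : H), innerA A (T x) x = ⟪P x, P (T x)⟫ := by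
    intro T x
    unfold innerA
    have hAx : A (T x) = P (P (T x)) := by rw [← hP2]; rfl
    rw [hAx, ← hPsym x (P (T x))]
  -- hypothesis in mul form, and derived identities
  have hBm : A * Bs = adjoint B * A := hB
  have hCm : A * Cs = adjoint C * A := hC
  have hBm' : adjoint Bs * A = A * B := by
    have := congrArg star hBm
    simpa [star_mul, star_eq_adjoint, adjoint_adjoint, hAsa.adjoint_eq] using this
  have hCm' : adjoint Cs * A = A * C := by
    have := congrArg star hCm
    simpa [star_mul, star_eq_adjoint, adjoint_adjoint, hAsa.adjoint_eq] using this
  -- bound on ‖P (T x)‖ for unit vectors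
  have bound : ∀ (T Ts : H →L[ℂ] H), A * Ts = adjoint T * A → adjoint Ts * A = A * T →
      ∀ x : H, ‖P x‖ = 1 → ‖P (T x)‖ ≤ Real.sqrt ‖Ts * T‖ := by
    intro T Ts hT hT' x hx
    set S := Ts * T with hSdef
    have hScomm : (P*P) * S = adjoint S * (P*P) := by
      rw [hP2, hSdef]
      calc A * (Ts * T) = (A * Ts) * T := (mul_assoc _ _ _).symm
        _ = (adjoint T * A) * T := by rw [hT]
        _ = adjoint T * (A * T) := mul_assoc _ _ _
        _ = adjoint T * (adjoint Ts * A) := by rw [hT']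
        _ = (adjoint T * adjoint Ts) * A := (mul_assoc _ _ _).symm
        _ = adjoint (Ts * T) * A := by
              congr 1
              simp [← star_eq_adjoint, star_mul]
    have hkb : ‖P (S x)‖ ≤ ‖S‖ := Stmt15Aux.key_bound P S hPsa hScomm x (le_of_eq hx)
    have hsq : ‖P (T x)‖^2 ≤ ‖S‖ := by
      have e1 : (⟪P (T x), P (T x)⟫ : ℂ) = ⟪P (S x), P x⟫ := by
        rw [hPsym]
        have h2 : P (P (T x)) = (A * T) x := by rw [← hP2]; rfl
        rw [h2, ← hT']
        have h3 : (adjoint Ts * A) x = adjoint Ts (A x) := rfl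
        rw [h3, adjoint_inner_right]
        have h4 : Ts (T x) = S x := rfl
        have h5 : A x = P (P x) := by rw [← hP2]; rfl
        rw [h4, h5, ← hPsym]
      have e2 : (‖P (T x)‖:ℝ)^2 = (⟪P (S x), P x⟫ : ℂ).re := by
        rw [← e1, inner_self_eq_norm_sq_to_K]
        simp [← Complex.ofReal_pow]
      rw [e2]
      calc (⟪P (S x), P x⟫ : ℂ).re ≤ ‖(⟪P (S x), P x⟫ : ℂ)‖ := Complex.re_le_norm _
        _ ≤ ‖P (S x)‖ * ‖P x‖ := norm_inner_le_norm _ _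
        _ = ‖P (S x)‖ := by rw [hx, mul_one]
        _ ≤ ‖S‖ := hkb
    rw [Real.le_sqrt (norm_nonneg _) (norm_nonneg _)]
    exact hsq
  -- abs of innerA bounds
  have habs : ∀ (T : H →L[ℂ] H) (x : H), ‖P x‖ = 1 →
      ‖innerA A (T x) x‖ ≤ ‖P (T x)‖ := by
    intro T x hx
    rw [hinner T x]
    calc ‖(⟪P x, P (T x)⟫ : ℂ)‖ = ‖(⟪P x, P (T x)⟫ : ℂ)‖ := rfl
      _ ≤ ‖P x‖ * ‖P (T x)‖ := norm_inner_le_norm _ _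
      _ = ‖P (T x)‖ := by rw [hx, one_mul]
  set MB := Real.sqrt ‖Bs * B‖ with hMB
  set MC := Real.sqrt ‖Cs * C‖ with hMC
  have hboundB : ∀ x : H, normA A x = 1 → ‖innerA A (B x) x‖ ≤ MB := by
    intro x hx
    rw [hnorm] at hx
    exact le_trans (habs B x hx) (bound B Bs hBm hBm' x hx)
  have hboundC : ∀ x : H, normA A x = 1 → ‖innerA A (C x) x‖ ≤ MC := by
    intro x hx
    rw [hnorm] at hx
    exact le_trans (habs C x hx) (bound C Cs hCm hCm' x hx)
  -- existence of a unit vector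
  have hne : ∃ x : H, normA A x = 1 := by
    have hex : ∃ x : H, P x ≠ 0 := by
      by_contra hno
      push_neg at hno
      apply hA0
      ext y
      have : A y = P (P y) := by rw [← hP2]; rfl
      simp [this, hno]
    obtain ⟨x, hx⟩ := hex
    have hnx : (0:ℝ) < ‖P x‖ := norm_pos_iff.2 hx
    refine ⟨((‖P x‖⁻¹ : ℝ) : ℂ) • x, ?_⟩
    rw [hnorm, map_smul, norm_smul]
    simp [abs_of_pos (inv_pos.2 hnx), inv_mul_cancel₀ (ne_of_gt hnx)]
  -- the wAe set
  set SE := {r : ℝ | ∃ x : H, normA A x = 1 ∧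
    r = Real.sqrt ((‖innerA A (B x) x‖)^2 + (‖innerA A (C x) x‖)^2)}
    with hSE
  have hbddSE : BddAbove SE := by
    refine ⟨Real.sqrt (MB^2 + MC^2), ?_⟩
    rintro r ⟨x, hx, rfl⟩
    apply Real.sqrt_le_sqrt
    have h1 := hboundB x hx
    have h2 := hboundC x hx
    have h3 : (0:ℝ) ≤ ‖innerA A (B x) x‖ := by positivity
    have h4 : (0:ℝ) ≤ ‖innerA A (C x) x‖ := by positivity
    nlinarith
  have hWnn : 0 ≤ wAe A B C := by
    apply Real.sSup_nonneg
    rintro r ⟨x, hx, rfl⟩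
    positivity
  have hkey : ∀ x : H, normA A x = 1 →
      (‖innerA A (B x) x‖)^2 + (‖innerA A (C x) x‖)^2 ≤ (wAe A B C)^2 := by
    intro x hx
    have hmem : Real.sqrt ((‖innerA A (B x) x‖)^2 + (‖innerA A (C x) x‖)^2)
        ∈ SE := ⟨x, hx, rfl⟩
    have hle : Real.sqrt ((‖innerA A (B x) x‖)^2 + (‖innerA A (C x) x‖)^2)
        ≤ wAe A B C := le_csSup hbddSE hmem
    have := pow_le_pow_left₀ (Real.sqrt_nonneg _) hle 2
    rwa [Real.sq_sqrt (by positivity)] at this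
  apply max_le
  · exact Stmt15Aux.aux_sets A B C _ hne hkey
  · exact Stmt15Aux.aux_sets A C B _ hne (fun x hx => by
      have := hkey x hx
      linarith)
end
end

section
/- Let B and C be A-bounded linear operators on H (i.e., there exists λ > 0 with ‖Bx‖_A ≤ λ‖x‖_A and ‖Cx‖_A ≤ λ‖x‖_A for all x). Then (w_{A,e}(B+C, B−C))² = 2·(w_{A,e}(B,C))². -/
noncomputable section

open scoped ComplexInnerProductSpace

variable {H : Type*} [NormedAddCommGroup H] [InnerProductSpace ℂ H] [CompleteSpace H]

/-- The semi-inner-product core induced by a positive operator. -/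
def coreA (A : H →L[ℂ] H) (hA : A.IsPositive) : PreInnerProductSpace.Core ℂ H where
  inner x y := ⟪x, A y⟫
  conj_inner_symm x y := by
    show starRingEnd ℂ ⟪y, A x⟫ = ⟪x, A y⟫
    rw [inner_conj_symm]
    exact (ContinuousLinearMap.isSelfAdjoint_iff_isSymmetric.mp hA.isSelfAdjoint) x y
  re_inner_nonneg x := hA.re_inner_nonneg_right x
  add_left x y z := by simp [inner_add_left]
  smul_left x y r := by simp [inner_smul_left]; ring

lemma csA (A : H →L[ℂ] H) (hA : A.IsPositive) (x y : H) :
    ‖⟪x, A y⟫‖ ≤ normA A x * normA A y := by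
  have h := InnerProductSpace.Core.inner_mul_inner_self_le (𝕜 := ℂ) (c := coreA A hA) x y
  have hconj : ⟪y, A x⟫ = starRingEnd ℂ ⟪x, A y⟫ := by
    have hsym := (ContinuousLinearMap.isSelfAdjoint_iff_isSymmetric.mp hA.isSelfAdjoint) y x
    rw [inner_conj_symm (A y) x]
    exact hsym.symm
  have habs : ‖⟪y, A x⟫‖ = ‖⟪x, A y⟫‖ := by
    rw [hconj, Complex.norm_conj]
  have h' : ‖⟪x, A y⟫‖ * ‖⟪x, A y⟫‖
      ≤ (⟪x, A x⟫ : ℂ).re * (⟪y, A y⟫ : ℂ).re := by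
    have h2 : ‖(⟪x, A y⟫ : ℂ)‖ * ‖(⟪y, A x⟫ : ℂ)‖
        ≤ RCLike.re (⟪x, A x⟫ : ℂ) * RCLike.re (⟪y, A y⟫ : ℂ) := h
    rw [habs] at h2
    exact h2
  have h1 : 0 ≤ (⟪x, A x⟫ : ℂ).re := hA.re_inner_nonneg_right x
  calc ‖⟪x, A y⟫‖
      = Real.sqrt (‖⟪x, A y⟫‖ * ‖⟪x, A y⟫‖) :=
        (Real.sqrt_mul_self (norm_nonneg _)).symm
    _ ≤ Real.sqrt ((⟪x, A x⟫ : ℂ).re * (⟪y, A y⟫ : ℂ).re) := Real.sqrt_le_sqrt h'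
    _ = normA A x * normA A y := by
        simp [normA, innerA, Real.sqrt_mul h1]

lemma normA_nonneg (A : H →L[ℂ] H) (x : H) : 0 ≤ normA A x := Real.sqrt_nonneg _

lemma normA_smul (A : H →L[ℂ] H) (c : ℂ) (x : H) :
    normA A (c • x) = ‖c‖ * normA A x := by
  unfold normA innerA
  have : (⟪c • x, A (c • x)⟫ : ℂ) = Complex.normSq c * ⟪x, A x⟫ := by
    rw [map_smul, inner_smul_left, inner_smul_right, ← mul_assoc, Complex.normSq_eq_conj_mul_self]
  rw [this]
  rw [show ((Complex.normSq c : ℂ) * ⟪x, A x⟫).re = Complex.normSq c * (⟪x, A x⟫ : ℂ).re from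
    Complex.re_ofReal_mul _ _]
  rw [Real.sqrt_mul (Complex.normSq_nonneg c), ← Complex.norm_def]

lemma exists_normA_one (A : H →L[ℂ] H) (hA : A.IsPositive) (hA0 : A ≠ 0) :
    ∃ x : H, normA A x = 1 := by
  have hpos : ∃ x : H, 0 < (⟪x, A x⟫ : ℂ).re := by
    by_contra hcon
    push_neg at hcon
    apply hA0
    ext y
    have hz : ∀ x : H, normA A x = 0 := fun x => by
      have := le_antisymm (hcon x) (hA.re_inner_nonneg_right x)
      simp [normA, innerA, this]
    have h1 : ‖⟪A y, A (y)⟫‖ ≤ normA A (A y) * normA A y := csA A hA (A y) y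
    rw [hz, hz, mul_zero] at h1
    have h2 : (⟪A y, A y⟫ : ℂ) = 0 := by
      have := norm_nonneg (⟪A y, A y⟫ : ℂ)
      have : ‖⟪A y, A y⟫‖ = 0 := le_antisymm h1 this
      exact norm_eq_zero.mp this
    simpa using inner_self_eq_zero.mp h2
  obtain ⟨x, hx⟩ := hpos
  have hnx : 0 < normA A x := Real.sqrt_pos.mpr hx
  refine ⟨(((normA A x)⁻¹ : ℝ) : ℂ) • x, ?_⟩
  rw [normA_smul]
  rw [show ‖(((normA A x)⁻¹ : ℝ) : ℂ)‖ = (normA A x)⁻¹ from by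
    rw [Complex.norm_real, Real.norm_eq_abs, abs_of_nonneg (inv_nonneg.mpr hnx.le)]]
  field_simp

lemma par_identity (b c : ℂ) :
    Real.sqrt ((‖b + c‖)^2 + (‖b - c‖)^2)
      = Real.sqrt 2 * Real.sqrt ((‖b‖)^2 + (‖c‖)^2) := by
  rw [← Real.sqrt_mul (by norm_num : (0:ℝ) ≤ 2)]
  congr 1
  simp only [Complex.sq_norm, Complex.normSq_apply, Complex.add_re, Complex.add_im,
    Complex.sub_re, Complex.sub_im]
  ring

theorem stmt16 (A : H →L[ℂ] H) (hA : A.IsPositive) (hA0 : A ≠ 0)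
    (B C : H →L[ℂ] H)
    (hBC : ∃ lam : ℝ, 0 < lam ∧ ∀ x : H,
      normA A (B x) ≤ lam * normA A x ∧ normA A (C x) ≤ lam * normA A x) :
    (wAe A (B + C) (B - C))^2 = 2 * (wAe A B C)^2 := by
  obtain ⟨lam, hlam, hl⟩ := hBC
  set S : Set ℝ := {r : ℝ | ∃ x : H, normA A x = 1 ∧
    r = Real.sqrt ((‖innerA A (B x) x‖)^2 + (‖innerA A (C x) x‖)^2)}
    with hS
  set S' : Set ℝ := {r : ℝ | ∃ x : H, normA A x = 1 ∧
    r = Real.sqrt ((‖innerA A ((B + C) x) x‖)^2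
      + (‖innerA A ((B - C) x) x‖)^2)} with hS'
  have hadd : ∀ x : H, innerA A ((B + C) x) x = innerA A (B x) x + innerA A (C x) x := by
    intro x
    simp [innerA, inner_add_right]
  have hsub : ∀ x : H, innerA A ((B - C) x) x = innerA A (B x) x - innerA A (C x) x := by
    intro x
    simp [innerA, inner_sub_right]
  have himg : S' = (fun r => Real.sqrt 2 * r) '' S := by
    ext r
    constructor
    · rintro ⟨x, hx, rfl⟩
      refine ⟨Real.sqrt ((‖innerA A (B x) x‖)^2
        + (‖innerA A (C x) x‖)^2), ⟨x, hx, rfl⟩, ?_⟩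
      rw [hadd, hsub, par_identity]
    · rintro ⟨s, ⟨x, hx, rfl⟩, rfl⟩
      exact ⟨x, hx, by rw [hadd, hsub, par_identity]⟩
  have hSne : S.Nonempty := by
    obtain ⟨x, hx⟩ := exists_normA_one A hA hA0
    exact ⟨_, x, hx, rfl⟩
  have hbound : ∀ r ∈ S, r ≤ Real.sqrt (lam^2 + lam^2) := by
    rintro r ⟨x, hx, rfl⟩
    apply Real.sqrt_le_sqrt
    have hB : ‖innerA A (B x) x‖ ≤ lam := by
      calc ‖innerA A (B x) x‖ ≤ normA A x * normA A (B x) := csA A hA x (B x)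
        _ = normA A (B x) := by rw [hx, one_mul]
        _ ≤ lam * 1 := (hl x).1.trans (by rw [hx])
        _ = lam := mul_one lam
    have hC : ‖innerA A (C x) x‖ ≤ lam := by
      calc ‖innerA A (C x) x‖ ≤ normA A x * normA A (C x) := csA A hA x (C x)
        _ = normA A (C x) := by rw [hx, one_mul]
        _ ≤ lam * 1 := (hl x).2.trans (by rw [hx])
        _ = lam := mul_one lam
    have h1 := norm_nonneg (innerA A (B x) x)
    have h2 := norm_nonneg (innerA A (C x) x)
    nlinarith
  have hSbdd : BddAbove S := ⟨Real.sqrt (lam^2 + lam^2), hbound⟩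
  have key : sSup S' = Real.sqrt 2 * sSup S := by
    rw [himg]
    exact (Monotone.map_csSup_of_continuousAt
      (f := fun r => Real.sqrt 2 * r)
      (continuous_const.mul continuous_id).continuousAt
      (fun a b hab => mul_le_mul_of_nonneg_left hab (Real.sqrt_nonneg 2))
      hSne hSbdd).symm
  have : wAe A (B + C) (B - C) = Real.sqrt 2 * wAe A B C := key
  rw [this, mul_pow, Real.sq_sqrt (by norm_num : (0:ℝ) ≤ 2)]
end
end

section
/- Let T be a bounded linear operator on H admitting an A-adjoint T♯. Then (w_A(T))² ≥ (1/2)·max{ ‖Re_A(T) + Im_A(T)‖_A², ‖Re_A(T) − Im_A(T)‖_A² } ≥ (1/4)·‖T♯T + TT♯‖_A. -/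
noncomputable section
set_option maxHeartbeats 2000000
set_option synthInstance.maxHeartbeats 2000000

open scoped ComplexInnerProductSpace

variable {H : Type*} [NormedAddCommGroup H] [InnerProductSpace ℂ H] [CompleteSpace H]

section AuxLemmas

private lemma aux_seq (a : ℕ → ℝ) (ha : ∀ n, 0 ≤ a n)
    (hlog : ∀ n, a (n+1)^2 ≤ a n * a (n+2)) (C K : ℝ) (hK : 0 ≤ K)
    (hb : ∀ n, a n ≤ C * K ^ n) : a 1 ≤ K * a 0 := by
  by_contra hcon
  push_neg at hcon
  have ha1 : 0 < a 1 := lt_of_le_of_lt (mul_nonneg hK (ha 0)) hcon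
  rcases eq_or_lt_of_le hK with hK0 | hK0
  · have := hb 1
    rw [← hK0] at this
    simp at this
    exact absurd this (by nlinarith)
  have hpos : ∀ n, 0 < a (n+1) := by
    intro n; induction n with
    | zero => exact ha1
    | succ k ih =>
      by_contra h
      have h0 : a (k+2) = 0 := le_antisymm (not_lt.1 h) (ha _)
      have := hlog k
      rw [h0] at this
      nlinarith
  have ha0 : 0 < a 0 := by
    by_contra h
    have h0 : a 0 = 0 := le_antisymm (not_lt.1 h) (ha 0)
    have := hlog 0
    rw [h0] at this
    nlinarith [hpos 0]
  have hrat : ∀ n, a 1 * a (n+1) ≤ a 0 * a (n+2) := by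
    intro n; induction n with
    | zero => have := hlog 0; nlinarith
    | succ k ih =>
      have h1 := hlog (k+1)
      have h2 : 0 < a (k+1+1) := hpos (k+1)
      nlinarith [hpos k, hpos (k+2), ha1.le, ha0.le, ha (k+3)]
  set q := a 1 / a 0 with hq_def
  have hq : K < q := (lt_div_iff₀ ha0).2 (by linarith)
  have hq0 : 0 < q := lt_of_le_of_lt hK hq
  have hgrow : ∀ n, a 0 * q ^ n ≤ a n := by
    intro n; induction n with
    | zero => simp
    | succ k ih =>
      have hk : q * a k ≤ a (k+1) := by
        rw [hq_def, div_mul_eq_mul_div, div_le_iff₀ ha0]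
        cases k with
        | zero => nlinarith
        | succ j => have := hrat j; nlinarith
      calc a 0 * q^(k+1) = q * (a 0 * q^k) := by ring
        _ ≤ q * a k := by nlinarith
        _ ≤ a (k+1) := hk
  have hqK : 1 < q / K := (one_lt_div hK0).2 hq
  have hbd : ∀ n, (q / K)^n ≤ C / a 0 := by
    intro n
    have h1 : a 0 * q ^ n ≤ C * K ^ n := (hgrow n).trans (hb n)
    rw [div_pow, le_div_iff₀ ha0, div_mul_eq_mul_div, div_le_iff₀ (pow_pos hK0 n)]
    nlinarith
  obtain ⟨n, hn⟩ := ((tendsto_pow_atTop_atTop_of_one_lt hqK).eventually_gt_atTop (C / a 0)).exists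
  exact absurd (hbd n) (not_le.2 hn)
open ContinuousLinearMap

variable {H : Type*} [NormedAddCommGroup H] [InnerProductSpace ℂ H] [CompleteSpace H]

private lemma aux_swap (R : H →L[ℂ] H) (hR : ContinuousLinearMap.adjoint R = R) (u v : H) :
    ⟪R u, v⟫ = ⟪u, R v⟫ := by
  conv_lhs => rw [← hR]
  exact ContinuousLinearMap.adjoint_inner_left R v u

private lemma aux_move2 (R T Ts : H →L[ℂ] H) (hR : ContinuousLinearMap.adjoint R = R)
    (hTs : (R * R) ∘L Ts = (ContinuousLinearMap.adjoint T) ∘L (R * R)) (x y : H) :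
    ⟪R x, R (Ts y)⟫ = ⟪R (T x), R y⟫ := by
  have h1 : R (R (Ts y)) = (ContinuousLinearMap.adjoint T) (R (R y)) := by
    have := ContinuousLinearMap.ext_iff.1 hTs y
    simpa [ContinuousLinearMap.mul_apply] using this
  calc ⟪R x, R (Ts y)⟫ = ⟪x, R (R (Ts y))⟫ := aux_swap R hR x _
    _ = ⟪x, (ContinuousLinearMap.adjoint T) (R (R y))⟫ := by rw [h1]
    _ = ⟪T x, R (R y)⟫ := ContinuousLinearMap.adjoint_inner_right T _ _
    _ = ⟪R (T x), R y⟫ := (aux_swap R hR (T x) (R y)).symm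

private lemma aux_sa_bound (R S : H →L[ℂ] H) (hR : ContinuousLinearMap.adjoint R = R)
    (hS : (R * R) ∘L S = (ContinuousLinearMap.adjoint S) ∘L (R * R)) (x : H) :
    ‖R (S x)‖ ≤ ‖S‖ * ‖R x‖ := by
  have hpow : ∀ n : ℕ, (S ^ (n+1)) x = S ((S ^ n) x) := by
    intro n; rw [pow_succ']; rfl
  set a : ℕ → ℝ := fun n => ‖R ((S ^ n) x)‖ with ha_def
  have hb : ∀ n, a n ≤ (‖R‖ * ‖x‖) * ‖S‖ ^ n := by
    intro n
    have h1 : ‖(S ^ n) x‖ ≤ ‖S‖ ^ n * ‖x‖ := by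
      induction n with
      | zero => simp
      | succ k ih =>
        rw [hpow k]
        calc ‖S ((S^k) x)‖ ≤ ‖S‖ * ‖(S^k) x‖ := S.le_opNorm _
          _ ≤ ‖S‖ * (‖S‖^k * ‖x‖) := by
              exact mul_le_mul_of_nonneg_left ih (norm_nonneg S)
          _ = ‖S‖^(k+1) * ‖x‖ := by ring
    calc a n ≤ ‖R‖ * ‖(S^n) x‖ := R.le_opNorm _
      _ ≤ ‖R‖ * (‖S‖^n * ‖x‖) := mul_le_mul_of_nonneg_left h1 (norm_nonneg R)
      _ = (‖R‖ * ‖x‖) * ‖S‖^n := by ring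
  have hlog : ∀ n, a (n+1)^2 ≤ a n * a (n+2) := by
    intro n
    have h2 : (a (n+1))^2 = ‖(⟪R ((S^(n+1)) x), R ((S^(n+1)) x)⟫ : ℂ)‖ := by
      rw [inner_self_eq_norm_sq_to_K (𝕜 := ℂ)]
      simp [ha_def]
    calc (a (n+1))^2 = ‖(⟪R ((S^(n+1)) x), R ((S^(n+1)) x)⟫ : ℂ)‖ := h2
      _ = ‖(⟪R (S ((S^n) x)), R (S ((S^n) x))⟫ : ℂ)‖ := by rw [hpow n]
      _ = ‖(⟪R (S (S ((S^n) x))), R ((S^n) x)⟫ : ℂ)‖ := by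
          rw [aux_move2 R S S hR hS]
      _ ≤ ‖R (S (S ((S^n) x)))‖ * ‖R ((S^n) x)‖ := norm_inner_le_norm _ _
      _ = a (n+2) * a n := by
          rw [show S (S ((S^n) x)) = (S^(n+2)) x from by rw [hpow (n+1), hpow n]]
      _ = a n * a (n+2) := mul_comm _ _
  have := aux_seq a (fun n => norm_nonneg _) hlog (‖R‖ * ‖x‖) ‖S‖ (norm_nonneg S) hb
  simpa [ha_def] using this

end AuxLemmas

theorem stmt19 (A : H →L[ℂ] H) (hA : A.IsPositive) (hA0 : A ≠ 0)
    (T Ts : H →L[ℂ] H)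
    (hT : A.comp Ts = (ContinuousLinearMap.adjoint T).comp A) :
    (1/2) * max ((opNormA A (ReA T Ts + ImA T Ts))^2)
        ((opNormA A (ReA T Ts - ImA T Ts))^2) ≤ (wA A T)^2
      ∧ (1/4) * opNormA A (Ts * T + T * Ts)
          ≤ (1/2) * max ((opNormA A (ReA T Ts + ImA T Ts))^2)
              ((opNormA A (ReA T Ts - ImA T Ts))^2) := by
  classical
  -- square root of A
  have h0 : (0:H→L[ℂ] H) ≤ A := (ContinuousLinearMap.nonneg_iff_isPositive A).2 hA
  set R := CFC.sqrt A with hR_def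
  have hR2 : R * R = A := CFC.sqrt_mul_sqrt_self A h0
  have hRnn : (0:H→L[ℂ] H) ≤ R := CFC.sqrt_nonneg A
  have hR : ContinuousLinearMap.adjoint R = R := IsSelfAdjoint.of_nonneg hRnn
  -- bridges
  have hinner : ∀ x y : H, innerA A x y = ⟪R y, R x⟫ := by
    intro x y
    show ⟪y, A x⟫ = _
    rw [← hR2]
    rw [show (R * R) x = R (R x) from rfl]
    exact (aux_swap R hR y (R x)).symm
  have hnorm : ∀ x : H, normA A x = ‖R x‖ := by
    intro x
    show Real.sqrt (innerA A x x).re = _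
    rw [hinner]
    rw [show ((⟪R x, R x⟫ : ℂ)).re = RCLike.re (⟪R x, R x⟫ : ℂ) from rfl,
      inner_self_eq_norm_sq (𝕜 := ℂ)]
    exact Real.sqrt_sq (norm_nonneg _)
  -- adjoint relations
  have hTsm : (R * R) * Ts = (ContinuousLinearMap.adjoint T) * (R * R) := by
    have : (R * R).comp Ts = (ContinuousLinearMap.adjoint T).comp (R * R) := by rw [hR2]; exact hT
    exact this
  have hRRsa : ContinuousLinearMap.adjoint (R * R) = R * R := by
    rw [← ContinuousLinearMap.star_eq_adjoint, star_mul, ContinuousLinearMap.star_eq_adjoint, hR]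
  have hTm : (R * R) * T = (ContinuousLinearMap.adjoint Ts) * (R * R) := by
    have h := congrArg ContinuousLinearMap.adjoint (show (R*R) ∘L Ts = (ContinuousLinearMap.adjoint T) ∘L (R*R) from hTsm)
    rw [ContinuousLinearMap.adjoint_comp, ContinuousLinearMap.adjoint_comp,
      ContinuousLinearMap.adjoint_adjoint, hRRsa] at h
    exact h.symm
  have hTs' : (R * R) ∘L Ts = (ContinuousLinearMap.adjoint T) ∘L (R * R) := hTsm
  have hT' : (R * R) ∘L T = (ContinuousLinearMap.adjoint Ts) ∘L (R * R) := hTm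
  -- unit vector
  obtain ⟨y0, hy0⟩ : ∃ y, R y ≠ 0 := by
    by_contra h
    push_neg at h
    apply hA0
    rw [← hR2]
    exact ContinuousLinearMap.ext fun y => by
      simp [ContinuousLinearMap.mul_apply, h y]
  have hx0 : ‖R (((‖R y0‖⁻¹ : ℝ) : ℂ) • y0)‖ = 1 := by
    rw [map_smul, norm_smul]
    simp [norm_ne_zero_iff.2 hy0]
  set x0 : H := ((‖R y0‖⁻¹ : ℝ) : ℂ) • y0 with hx0_def
  have hx0A : normA A x0 = 1 := by rw [hnorm]; exact hx0
  -- the coefficient c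
  set c : ℂ := 2⁻¹ + (2 * Complex.I)⁻¹ with hc_def
  have hcval : c = (1 - Complex.I)/2 := by
    rw [hc_def, mul_inv, Complex.inv_I]; ring
  have hcconj : (starRingEnd ℂ) c = 2⁻¹ - (2 * Complex.I)⁻¹ := by
    rw [hc_def]
    simp only [map_add, map_inv₀, map_mul, Complex.conj_I, map_ofNat]
    ring
  have hcbar : (starRingEnd ℂ) c = (1 + Complex.I)/2 := by
    rw [hcconj, mul_inv, Complex.inv_I]; ring
  have hcabs : ‖c‖ = Real.sqrt 2 / 2 := by
    rw [hcval, norm_div, Complex.norm_two]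
    congr 1
    rw [Complex.norm_def, Complex.normSq_apply]
    norm_num
  have hUeq : ReA T Ts + ImA T Ts = c • T + (starRingEnd ℂ) c • Ts := by
    rw [hcconj, hc_def]; unfold ReA ImA; module
  have hVeq : ReA T Ts - ImA T Ts = (starRingEnd ℂ) c • T + c • Ts := by
    rw [hcconj, hc_def]; unfold ReA ImA; module
  -- A-selfadjointness of the combinations
  have hsa_comb : ∀ d : ℂ, (R*R) ∘L (d • T + (starRingEnd ℂ) d • Ts)
      = (ContinuousLinearMap.adjoint (d • T + (starRingEnd ℂ) d • Ts)) ∘L (R*R) := by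
    intro d
    have hadj : ContinuousLinearMap.adjoint (d • T + (starRingEnd ℂ) d • Ts)
        = (starRingEnd ℂ) d • ContinuousLinearMap.adjoint T + d • ContinuousLinearMap.adjoint Ts := by
      rw [← ContinuousLinearMap.star_eq_adjoint, star_add, star_smul, star_smul]
      simp only [ContinuousLinearMap.star_eq_adjoint, RCLike.star_def, Complex.conj_conj]
    rw [hadj, ContinuousLinearMap.comp_add, ContinuousLinearMap.add_comp,
      ContinuousLinearMap.comp_smul, ContinuousLinearMap.comp_smul,
      ContinuousLinearMap.smul_comp, ContinuousLinearMap.smul_comp,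
      hT', hTs']
    rw [add_comm]
  have hU : (R*R) ∘L (ReA T Ts + ImA T Ts)
      = (ContinuousLinearMap.adjoint (ReA T Ts + ImA T Ts)) ∘L (R*R) := by
    rw [hUeq]; exact hsa_comb c
  have hV : (R*R) ∘L (ReA T Ts - ImA T Ts)
      = (ContinuousLinearMap.adjoint (ReA T Ts - ImA T Ts)) ∘L (R*R) := by
    rw [hVeq]
    have h := hsa_comb ((starRingEnd ℂ) c)
    rwa [Complex.conj_conj] at h
  -- A-selfadjointness of D = Ts T + T Ts
  have hDadj : ContinuousLinearMap.adjoint (Ts * T + T * Ts)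
      = (ContinuousLinearMap.adjoint T) * (ContinuousLinearMap.adjoint Ts)
        + (ContinuousLinearMap.adjoint Ts) * (ContinuousLinearMap.adjoint T) := by
    rw [← ContinuousLinearMap.star_eq_adjoint, star_add, star_mul, star_mul]
    simp only [ContinuousLinearMap.star_eq_adjoint]
  have hD : (R*R) ∘L (Ts * T + T * Ts)
      = (ContinuousLinearMap.adjoint (Ts * T + T * Ts)) ∘L (R*R) := by
    rw [hDadj]
    show (R*R) * (Ts * T + T * Ts) = _ * (R*R)
    rw [mul_add, add_mul]
    have h1 : (R*R) * (Ts * T) = ((ContinuousLinearMap.adjoint T) * (ContinuousLinearMap.adjoint Ts)) * (R*R) := by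
      rw [← mul_assoc, hTsm, mul_assoc, hTm, ← mul_assoc]
    have h2 : (R*R) * (T * Ts) = ((ContinuousLinearMap.adjoint Ts) * (ContinuousLinearMap.adjoint T)) * (R*R) := by
      rw [← mul_assoc, hTm, mul_assoc, hTsm, ← mul_assoc]
    rw [h1, h2]
  -- identity U² + V² = TsT + TTs
  have hDid : (ReA T Ts + ImA T Ts) * (ReA T Ts + ImA T Ts)
      + (ReA T Ts - ImA T Ts) * (ReA T Ts - ImA T Ts) = Ts * T + T * Ts := by
    rw [hUeq, hVeq]
    rw [add_mul, mul_add, mul_add, add_mul, mul_add, mul_add]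
    rw [smul_mul_smul_comm, smul_mul_smul_comm, smul_mul_smul_comm, smul_mul_smul_comm,
      smul_mul_smul_comm, smul_mul_smul_comm, smul_mul_smul_comm, smul_mul_smul_comm]
    rw [hcbar, hcval]
    match_scalars
    · linear_combination (1/2 : ℂ) * Complex.I_sq
    · linear_combination (-1/2 : ℂ) * Complex.I_sq
    · linear_combination (-1/2 : ℂ) * Complex.I_sq
    · linear_combination (1/2 : ℂ) * Complex.I_sq
  -- general A-seminorm bound for T
  have hSsa : (R*R) ∘L (Ts ∘L T) = (ContinuousLinearMap.adjoint (Ts ∘L T)) ∘L (R*R) := by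
    rw [ContinuousLinearMap.adjoint_comp]
    show (R*R) * (Ts * T) = ((ContinuousLinearMap.adjoint T) * (ContinuousLinearMap.adjoint Ts)) * (R*R)
    rw [← mul_assoc, hTsm, mul_assoc, hTm, ← mul_assoc]
  have hTbound : ∀ x : H, ‖R (T x)‖ ≤ Real.sqrt ‖Ts ∘L T‖ * ‖R x‖ := by
    intro x
    have h1 : (‖R (T x)‖:ℝ)^2 = ‖(⟪R (T x), R (T x)⟫ : ℂ)‖ := by
      rw [inner_self_eq_norm_sq_to_K (𝕜 := ℂ)]; simp
    have h2 : (⟪R (T x), R (T x)⟫ : ℂ) = ⟪R (Ts (T x)), R x⟫ :=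
      aux_move2 R Ts T hR hT' (T x) x
    have h3 : ‖R ((Ts ∘L T) x)‖ ≤ ‖Ts ∘L T‖ * ‖R x‖ := aux_sa_bound R (Ts ∘L T) hR hSsa x
    have h4 : ‖R (T x)‖^2 ≤ ‖Ts ∘L T‖ * ‖R x‖^2 := by
      rw [h1, h2]
      calc ‖(⟪R (Ts (T x)), R x⟫:ℂ)‖ ≤ ‖R (Ts (T x))‖ * ‖R x‖ := norm_inner_le_norm _ _
        _ ≤ (‖Ts ∘L T‖ * ‖R x‖) * ‖R x‖ := mul_le_mul_of_nonneg_right h3 (norm_nonneg _)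
        _ = ‖Ts ∘L T‖ * ‖R x‖^2 := by ring
    have h5 : (0:ℝ) ≤ ‖Ts ∘L T‖ := norm_nonneg _
    calc ‖R (T x)‖ = Real.sqrt (‖R (T x)‖^2) := (Real.sqrt_sq (norm_nonneg _)).symm
      _ ≤ Real.sqrt (‖Ts ∘L T‖ * ‖R x‖^2) := Real.sqrt_le_sqrt h4
      _ = Real.sqrt ‖Ts ∘L T‖ * ‖R x‖ := by
          rw [Real.sqrt_mul h5, Real.sqrt_sq (norm_nonneg _)]
  -- wA T facts
  have hwT_bdd : BddAbove {r : ℝ | ∃ x, normA A x = 1 ∧ r = ‖innerA A (T x) x‖} := by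
    refine ⟨Real.sqrt ‖Ts ∘L T‖, ?_⟩
    rintro r ⟨x, hx, rfl⟩
    rw [hnorm] at hx
    rw [hinner]
    calc ‖(⟪R x, R (T x)⟫:ℂ)‖ ≤ ‖R x‖ * ‖R (T x)‖ := norm_inner_le_norm _ _
      _ ≤ ‖R x‖ * (Real.sqrt ‖Ts ∘L T‖ * ‖R x‖) :=
          mul_le_mul_of_nonneg_left (hTbound x) (norm_nonneg _)
      _ = Real.sqrt ‖Ts ∘L T‖ := by rw [hx]; ring
  have hwT_mem : ∀ x : H, ‖R x‖ = 1 → ‖(⟪R x, R (T x)⟫:ℂ)‖ ≤ wA A T := by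
    intro x hx
    rw [show ‖(⟪R x, R (T x)⟫:ℂ)‖ = ‖innerA A (T x) x‖ from by
      rw [hinner]]
    exact le_csSup hwT_bdd ⟨x, by rw [hnorm]; exact hx, rfl⟩
  have hwT0 : 0 ≤ wA A T :=
    Real.sSup_nonneg (fun r hr => by obtain ⟨x, hx, rfl⟩ := hr; exact norm_nonneg _)
  -- main lemma: for A-selfadjoint M, ‖Mx‖_A ≤ w_A(M) on the A-unit sphere
  have hL1 : ∀ M : H →L[ℂ] H,
      (R*R) ∘L M = (ContinuousLinearMap.adjoint M) ∘L (R*R) →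
      ∀ x : H, ‖R x‖ = 1 → ‖R (M x)‖ ≤ wA A M := by
    intro M hM x hx
    have hbddW : BddAbove {r : ℝ | ∃ y, normA A y = 1 ∧ r = ‖innerA A (M y) y‖} := by
      refine ⟨‖M‖, ?_⟩
      rintro r ⟨y, hy, rfl⟩
      rw [hnorm] at hy
      rw [hinner]
      calc ‖(⟪R y, R (M y)⟫:ℂ)‖ ≤ ‖R y‖ * ‖R (M y)‖ := norm_inner_le_norm _ _
        _ ≤ ‖R y‖ * (‖M‖ * ‖R y‖) :=
            mul_le_mul_of_nonneg_left (aux_sa_bound R M hR hM y) (norm_nonneg _)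
        _ = ‖M‖ := by rw [hy]; ring
    have hw0 : 0 ≤ wA A M :=
      Real.sSup_nonneg (fun r hr => by obtain ⟨y, hy, rfl⟩ := hr; exact norm_nonneg _)
    have hdom : ∀ z : H, ‖(⟪R z, R (M z)⟫ : ℂ)‖ ≤ wA A M * ‖R z‖^2 := by
      intro z
      by_cases hz : ‖R z‖ = 0
      · have h1 : ‖(⟪R z, R (M z)⟫:ℂ)‖ ≤ ‖R z‖ * ‖R (M z)‖ := norm_inner_le_norm _ _
        rw [hz, zero_mul] at h1
        rw [hz]
        simpa using h1
      · have ht : 0 < ‖R z‖ := lt_of_le_of_ne (norm_nonneg _) (Ne.symm hz)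
        have hu1 : ‖R (((‖R z‖⁻¹ : ℝ) : ℂ) • z)‖ = 1 := by
          rw [map_smul, norm_smul]
          simp [hz]
        have humem : ‖innerA A (M (((‖R z‖⁻¹ : ℝ) : ℂ) • z)) (((‖R z‖⁻¹ : ℝ) : ℂ) • z)‖ ≤ wA A M :=
          le_csSup hbddW ⟨_, by rw [hnorm]; exact hu1, rfl⟩
        have hval : innerA A (M (((‖R z‖⁻¹ : ℝ) : ℂ) • z)) (((‖R z‖⁻¹ : ℝ) : ℂ) • z)
            = ((‖R z‖⁻¹ : ℝ) : ℂ) * ((‖R z‖⁻¹ : ℝ) : ℂ) * ⟪R z, R (M z)⟫ := by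
          rw [hinner, map_smul, map_smul, map_smul, inner_smul_left, inner_smul_right,
            Complex.conj_ofReal]
          ring
        rw [hval, norm_mul, norm_mul] at humem
        have habs : ‖(((‖R z‖⁻¹ : ℝ) : ℂ))‖ = ‖R z‖⁻¹ := by
          rw [Complex.norm_real, Real.norm_eq_abs, abs_of_nonneg (inv_nonneg.2 (norm_nonneg _))]
        rw [habs] at humem
        have h2 : ‖R z‖⁻¹ * ‖R z‖⁻¹ * ‖(⟪R z, R (M z)⟫:ℂ)‖ ≤ wA A M := humem
        have h3 : (0:ℝ) < ‖R z‖^2 := by positivity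
        calc ‖(⟪R z, R (M z)⟫:ℂ)‖
            = (‖R z‖⁻¹ * ‖R z‖⁻¹ * ‖(⟪R z, R (M z)⟫:ℂ)‖) * ‖R z‖^2 := by
              field_simp
              try exact Or.inl (by ring)
            _ ≤ wA A M * ‖R z‖^2 := mul_le_mul_of_nonneg_right h2 h3.le
    by_cases h0 : ‖R (M x)‖ = 0
    · rw [h0]; exact hw0
    · have hMx : 0 < ‖R (M x)‖ := lt_of_le_of_ne (norm_nonneg _) (Ne.symm h0)
      set y : H := ((‖R (M x)‖⁻¹ : ℝ) : ℂ) • M x with hy_def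
      have hy1 : ‖R y‖ = 1 := by
        rw [hy_def, map_smul, norm_smul]
        simp [h0]
      have hcross : (⟪R x, R (M y)⟫ : ℂ) = (starRingEnd ℂ) ⟪R y, R (M x)⟫ := by
        rw [aux_move2 R M M hR hM x y]
        exact (inner_conj_symm _ _).symm
      have hexp_add : (⟪R (x+y), R (M (x+y))⟫ : ℂ)
          = ⟪R x, R (M x)⟫ + ⟪R x, R (M y)⟫ + ⟪R y, R (M x)⟫ + ⟪R y, R (M y)⟫ := by
        simp only [map_add, inner_add_left, inner_add_right]
        ring
      have hexp_sub : (⟪R (x-y), R (M (x-y))⟫ : ℂ)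
          = ⟪R x, R (M x)⟫ - ⟪R x, R (M y)⟫ - ⟪R y, R (M x)⟫ + ⟪R y, R (M y)⟫ := by
        simp only [map_sub, inner_sub_left, inner_sub_right]
        ring
      have hyMx : (⟪R y, R (M x)⟫ : ℂ) = ((‖R (M x)‖ : ℝ) : ℂ) := by
        rw [hy_def, map_smul, inner_smul_left, Complex.conj_ofReal,
          inner_self_eq_norm_sq_to_K (𝕜 := ℂ)]
        push_cast
        field_simp
        rw [sq, mul_div_assoc]; simp [h0, norm_ne_zero_iff.mp h0]
      have hdiff : (⟪R (x+y), R (M (x+y))⟫ : ℂ) - ⟪R (x-y), R (M (x-y))⟫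
          = ((4 * ‖R (M x)‖ : ℝ) : ℂ) := by
        rw [hexp_add, hexp_sub, hcross, hyMx, Complex.conj_ofReal]
        push_cast
        ring
      have hre : (4:ℝ) * ‖R (M x)‖
          ≤ ‖(⟪R (x+y), R (M (x+y))⟫:ℂ)‖ + ‖(⟪R (x-y), R (M (x-y))⟫:ℂ)‖ := by
        have h1 : (4:ℝ) * ‖R (M x)‖
            = ((⟪R (x+y), R (M (x+y))⟫ : ℂ) - ⟪R (x-y), R (M (x-y))⟫).re := by
          rw [hdiff, Complex.ofReal_re]
        have h2 := Complex.abs_re_le_norm (⟪R (x+y), R (M (x+y))⟫ : ℂ)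
        have h3 := Complex.abs_re_le_norm (⟪R (x-y), R (M (x-y))⟫ : ℂ)
        rw [h1, Complex.sub_re]
        have h4 := abs_le.1 h2
        have h5 := abs_le.1 h3
        linarith [h4.1, h4.2, h5.1, h5.2]
      have hpar : ‖R (x+y)‖^2 + ‖R (x-y)‖^2 = 4 := by
        rw [map_add, map_sub]
        have hp := parallelogram_law_with_norm ℂ (R x) (R y)
        rw [hx, hy1] at hp
        simp only [pow_two]
        nlinarith [hp]
      have h2 := hdom (x+y)
      have h3 := hdom (x-y)
      nlinarith [hw0, sq_nonneg (‖R (x+y)‖), sq_nonneg (‖R (x-y)‖)]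
  -- nonemptiness of the defining sets
  have hne_op : ∀ M : H →L[ℂ] H,
      {r : ℝ | ∃ x, normA A x = 1 ∧ r = normA A (M x)}.Nonempty :=
    fun M => ⟨normA A (M x0), x0, hx0A, rfl⟩
  have hne_w : ∀ M : H →L[ℂ] H,
      {r : ℝ | ∃ x, normA A x = 1 ∧ r = ‖innerA A (M x) x‖}.Nonempty :=
    fun M => ⟨_, x0, hx0A, rfl⟩
  -- opNormA facts for A-selfadjoint operators
  have hop_bdd : ∀ M : H →L[ℂ] H,
      ((R*R) ∘L M = (ContinuousLinearMap.adjoint M) ∘L (R*R)) →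
      BddAbove {r : ℝ | ∃ x, normA A x = 1 ∧ r = normA A (M x)} := by
    intro M hM
    refine ⟨‖M‖, ?_⟩
    rintro r ⟨x, hx, rfl⟩
    rw [hnorm] at hx
    rw [hnorm]
    calc ‖R (M x)‖ ≤ ‖M‖ * ‖R x‖ := aux_sa_bound R M hR hM x
      _ = ‖M‖ := by rw [hx]; ring
  have hop_nonneg : ∀ M : H →L[ℂ] H, 0 ≤ opNormA A M := by
    intro M
    exact Real.sSup_nonneg (fun r hr => by
      obtain ⟨x, hx, rfl⟩ := hr
      exact Real.sqrt_nonneg _)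
  -- numerical radius of U and V vs numerical radius of T
  have hwcomb : ∀ d : ℂ, ‖d‖ = Real.sqrt 2 / 2 →
      ∀ x : H, ‖R x‖ = 1 →
      ‖(⟪R x, R ((d • T + (starRingEnd ℂ) d • Ts) x)⟫ : ℂ)‖ ≤ Real.sqrt 2 * wA A T := by
    intro d hd x hx
    have hTscross : (⟪R x, R (Ts x)⟫ : ℂ) = (starRingEnd ℂ) ⟪R x, R (T x)⟫ := by
      rw [aux_move2 R T Ts hR hTs' x x]
      exact (inner_conj_symm _ _).symm
    have hval : (⟪R x, R ((d • T + (starRingEnd ℂ) d • Ts) x)⟫ : ℂ)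
        = d * ⟪R x, R (T x)⟫ + (starRingEnd ℂ) (d * ⟪R x, R (T x)⟫) := by
      rw [show (d • T + (starRingEnd ℂ) d • Ts) x = d • T x + (starRingEnd ℂ) d • Ts x from rfl]
      rw [map_add, map_smul, map_smul, inner_add_right, inner_smul_right, inner_smul_right,
        hTscross, map_mul]
    rw [hval, Complex.add_conj]
    have h1 : ‖(((2 * (d * ⟪R x, R (T x)⟫).re : ℝ)) : ℂ)‖ = |2 * (d * ⟪R x, R (T x)⟫).re| :=
      Complex.norm_real _
    rw [h1]
    have h2 : |2 * (d * ⟪R x, R (T x)⟫).re| ≤ 2 * ‖d * ⟪R x, R (T x)⟫‖ := by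
      rw [abs_mul, abs_two]
      have := Complex.abs_re_le_norm (d * ⟪R x, R (T x)⟫)
      linarith
    have h3 : ‖d * ⟪R x, R (T x)⟫‖
        = (Real.sqrt 2 / 2) * ‖(⟪R x, R (T x)⟫ : ℂ)‖ := by
      rw [norm_mul, hd]
    have h4 : ‖(⟪R x, R (T x)⟫ : ℂ)‖ ≤ wA A T := hwT_mem x hx
    have h5 : (0:ℝ) ≤ Real.sqrt 2 := Real.sqrt_nonneg 2
    calc |2 * (d * ⟪R x, R (T x)⟫).re| ≤ 2 * ‖d * ⟪R x, R (T x)⟫‖ := h2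
      _ = Real.sqrt 2 * ‖(⟪R x, R (T x)⟫ : ℂ)‖ := by rw [h3]; ring
      _ ≤ Real.sqrt 2 * wA A T := mul_le_mul_of_nonneg_left h4 h5
  -- bound on wA of U and V
  have hwU : wA A (ReA T Ts + ImA T Ts) ≤ Real.sqrt 2 * wA A T := by
    refine csSup_le (hne_w _) ?_
    rintro r ⟨x, hx, rfl⟩
    rw [hnorm] at hx
    rw [hinner]
    have := hwcomb c hcabs x hx
    rwa [← hUeq] at this
  have hwV : wA A (ReA T Ts - ImA T Ts) ≤ Real.sqrt 2 * wA A T := by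
    refine csSup_le (hne_w _) ?_
    rintro r ⟨x, hx, rfl⟩
    rw [hnorm] at hx
    rw [hinner]
    have habs' : ‖(starRingEnd ℂ) c‖ = Real.sqrt 2 / 2 := by
      rw [Complex.norm_conj]; exact hcabs
    have := hwcomb ((starRingEnd ℂ) c) habs' x hx
    rw [Complex.conj_conj] at this
    rwa [← hVeq] at this
  -- opNormA of U, V bounded by √2 wA T
  have hNU : opNormA A (ReA T Ts + ImA T Ts) ≤ Real.sqrt 2 * wA A T := by
    refine csSup_le (hne_op _) ?_
    rintro r ⟨x, hx, rfl⟩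
    rw [hnorm] at hx
    rw [hnorm]
    exact (hL1 _ hU x hx).trans hwU
  have hNV : opNormA A (ReA T Ts - ImA T Ts) ≤ Real.sqrt 2 * wA A T := by
    refine csSup_le (hne_op _) ?_
    rintro r ⟨x, hx, rfl⟩
    rw [hnorm] at hx
    rw [hnorm]
    exact (hL1 _ hV x hx).trans hwV
  -- part 1
  have hsq : (Real.sqrt 2 * wA A T)^2 = 2 * (wA A T)^2 := by
    rw [mul_pow, Real.sq_sqrt (by norm_num : (2:ℝ) ≥ 0)]
  have hNU2 : (opNormA A (ReA T Ts + ImA T Ts))^2 ≤ 2 * (wA A T)^2 := by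
    rw [← hsq]
    exact pow_le_pow_left₀ (hop_nonneg _) hNU 2
  have hNV2 : (opNormA A (ReA T Ts - ImA T Ts))^2 ≤ 2 * (wA A T)^2 := by
    rw [← hsq]
    exact pow_le_pow_left₀ (hop_nonneg _) hNV 2
  have part1 : (1/2) * max ((opNormA A (ReA T Ts + ImA T Ts))^2)
      ((opNormA A (ReA T Ts - ImA T Ts))^2) ≤ (wA A T)^2 := by
    have := max_le hNU2 hNV2
    linarith [this]
  refine ⟨part1, ?_⟩
  -- part 2
  have hop_mem : ∀ (M : H →L[ℂ] H) (hM : (R*R) ∘L M = (ContinuousLinearMap.adjoint M) ∘L (R*R))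
      (x : H), ‖R x‖ = 1 → ‖R (M x)‖ ≤ opNormA A M := by
    intro M hM x hx
    exact le_csSup (hop_bdd M hM) ⟨x, by rw [hnorm]; exact hx, by rw [hnorm]⟩
  have hwD : wA A (Ts * T + T * Ts)
      ≤ (opNormA A (ReA T Ts + ImA T Ts))^2 + (opNormA A (ReA T Ts - ImA T Ts))^2 := by
    refine csSup_le (hne_w _) ?_
    rintro r ⟨x, hx, rfl⟩
    rw [hnorm] at hx
    rw [hinner]
    set U := ReA T Ts + ImA T Ts with hU_def
    set V := ReA T Ts - ImA T Ts with hV_def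
    have hDx : (Ts * T + T * Ts) x = U (U x) + V (V x) := by
      rw [← hDid]; rfl
    have hinU : (⟪R x, R (U (U x))⟫ : ℂ) = ⟪R (U x), R (U x)⟫ :=
      aux_move2 R U U hR hU x (U x)
    have hinV : (⟪R x, R (V (V x))⟫ : ℂ) = ⟪R (V x), R (V x)⟫ :=
      aux_move2 R V V hR hV x (V x)
    have hval : (⟪R x, R ((Ts * T + T * Ts) x)⟫ : ℂ)
        = ((‖R (U x)‖^2 + ‖R (V x)‖^2 : ℝ) : ℂ) := by
      rw [hDx, map_add, inner_add_right, hinU, hinV,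
        inner_self_eq_norm_sq_to_K (𝕜 := ℂ), inner_self_eq_norm_sq_to_K (𝕜 := ℂ)]
      norm_cast
    rw [hval, Complex.norm_real, Real.norm_eq_abs, abs_of_nonneg (by positivity :
      (0:ℝ) ≤ ‖R ((ReA T Ts + ImA T Ts) x)‖^2 + ‖R ((ReA T Ts - ImA T Ts) x)‖^2)]
    have hU1 : ‖R (U x)‖ ≤ opNormA A U := hop_mem U hU x hx
    have hV1 : ‖R (V x)‖ ≤ opNormA A V := hop_mem V hV x hx
    have hU2 : ‖R (U x)‖^2 ≤ (opNormA A U)^2 := pow_le_pow_left₀ (norm_nonneg _) hU1 2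
    have hV2 : ‖R (V x)‖^2 ≤ (opNormA A V)^2 := pow_le_pow_left₀ (norm_nonneg _) hV1 2
    linarith
  have hND : opNormA A (Ts * T + T * Ts)
      ≤ (opNormA A (ReA T Ts + ImA T Ts))^2 + (opNormA A (ReA T Ts - ImA T Ts))^2 := by
    refine csSup_le (hne_op _) ?_
    rintro r ⟨x, hx, rfl⟩
    rw [hnorm] at hx
    rw [hnorm]
    exact (hL1 _ hD x hx).trans hwD
  have hmax1 : (opNormA A (ReA T Ts + ImA T Ts))^2
      ≤ max ((opNormA A (ReA T Ts + ImA T Ts))^2) ((opNormA A (ReA T Ts - ImA T Ts))^2) :=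
    le_max_left _ _
  have hmax2 : (opNormA A (ReA T Ts - ImA T Ts))^2
      ≤ max ((opNormA A (ReA T Ts + ImA T Ts))^2) ((opNormA A (ReA T Ts - ImA T Ts))^2) :=
    le_max_right _ _
  linarith
end
end
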